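/- arXiv:1002.2831 — 6 statements merged into one kernel-verified Lean document; each statement's English description precedes it below -/
import Mathlib

section
/- Let 0 < α ≤ 1 and β > 0 with α + β > 1, and fix δ > 0. Define K(z) = Σ_{k=1}^∞ 1/(k^α (z + k^β)) and h(z) = ∫₁^∞ dx/(x^α (z + x^β)). Then there exists a constant C such that for all z with |arg z| < π − δ and |z| ≥ 1, |K(z) − h(z)| ≤ C/|z|. -/
set_option maxHeartbeats 1000000

open Complex Real MeasureTheory Set Filter

lemma rpow_sub_le_aux (p k x : ℝ) (hp : 0 < p) (hk : 1 ≤ k) (h1 : k ≤ x) (h2 : x ≤ k + 1) :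
    x ^ p - k ^ p ≤ p * 2 ^ p * k ^ (p - 1) * (x - k) := by
  have hk0 : (0:ℝ) < k := lt_of_lt_of_le one_pos hk
  have hbound : ∀ t ∈ Icc k (k+1), ‖p * t ^ (p-1)‖ ≤ p * (2 ^ p * k ^ (p-1)) := by
    intro t ht
    have ht0 : (0:ℝ) < t := lt_of_lt_of_le hk0 ht.1
    rw [Real.norm_eq_abs, abs_mul, abs_of_pos hp, abs_of_pos (Real.rpow_pos_of_pos ht0 _)]
    have h2p : (1:ℝ) ≤ 2 ^ p := Real.one_le_rpow one_le_two hp.le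
    rcases le_or_gt p 1 with hp1 | hp1
    · have : t ^ (p-1) ≤ k ^ (p-1) :=
        Real.rpow_le_rpow_of_nonpos hk0 ht.1 (by linarith)
      have hkp : (0:ℝ) < k ^ (p-1) := Real.rpow_pos_of_pos hk0 _
      have h3 := mul_le_mul_of_nonneg_left this hp.le
      nlinarith [mul_nonneg (mul_nonneg hp.le hkp.le) (by linarith : (0:ℝ) ≤ 2 ^ p - 1)]
    · have : t ^ (p-1) ≤ (2*k) ^ (p-1) :=
        Real.rpow_le_rpow ht0.le (by linarith [ht.2]) (by linarith)
      have h2k : (2*k:ℝ) ^ (p-1) = 2 ^ (p-1) * k ^ (p-1) :=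
        Real.mul_rpow (by norm_num) hk0.le
      have h22 : (2:ℝ) ^ (p-1) ≤ 2 ^ p :=
        Real.rpow_le_rpow_of_exponent_le one_le_two (by linarith)
      have hkp : (0:ℝ) < k ^ (p-1) := Real.rpow_pos_of_pos hk0 _
      have h3 := mul_le_mul_of_nonneg_left this hp.le
      nlinarith [mul_nonneg (mul_nonneg hp.le hkp.le) (by linarith : (0:ℝ) ≤ 2 ^ p - 2 ^ (p-1))]
  have hmvt := Convex.norm_image_sub_le_of_norm_hasDerivWithin_le
    (f := fun t : ℝ => t ^ p) (f' := fun t : ℝ => p * t ^ (p-1))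
    (s := Icc k (k+1)) (C := p * (2 ^ p * k ^ (p-1)))
    (fun t ht => by
      have ht0 : t ≠ 0 := ne_of_gt (lt_of_lt_of_le hk0 ht.1)
      simpa [mul_comm] using
        (Real.hasDerivAt_rpow_const (Or.inl ht0) (x := t) (p := p)).hasDerivWithinAt)
    hbound (convex_Icc _ _) ⟨le_refl k, by linarith⟩ ⟨h1, h2⟩
  have := le_trans (le_abs_self _) (by simpa [Real.norm_eq_abs] using hmvt)
  rw [_root_.abs_of_nonneg (by linarith : (0:ℝ) ≤ x - k)] at this
  linarith [this]

lemma split_frac (u v P Q : ℂ) (hu : u ≠ 0) (hv : v ≠ 0) (hP : P ≠ 0) (hQ : Q ≠ 0) :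
    1/(u*P) - 1/(v*Q) = (v-u)/(u*v*P) + (Q-P)/(v*P*Q) := by
  field_simp
  ring

lemma pointwise_bound (α β : ℝ) (hα0 : 0 < α) (hα1 : α ≤ 1) (hβ : 0 < β)
    (z : ℂ) (hz1 : 1 ≤ ‖z‖) (c : ℝ) (hc : 0 < c)
    (hsec : ∀ t : ℝ, 0 ≤ t → c * (‖z‖ + t) ≤ ‖z + t‖)
    (k x : ℝ) (hk : 1 ≤ k) (h1 : k ≤ x) (h2 : x ≤ k + 1) :
    ‖1 / (((k^α : ℝ):ℂ) * (z + ((k^β : ℝ):ℂ))) -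
        1 / (((x^α : ℝ):ℂ) * (z + ((x^β : ℝ):ℂ)))‖
      ≤ (α * 2^α / c + β * 2^β / c^2) * k^(-1-α) / ‖z‖ := by
  have hk0 : (0:ℝ) < k := lt_of_lt_of_le one_pos hk
  have hx0 : (0:ℝ) < x := lt_of_lt_of_le hk0 h1
  set Z := ‖z‖ with hZ
  have hZ0 : (0:ℝ) < Z := lt_of_lt_of_le one_pos hz1
  have hka : (0:ℝ) < k ^ α := Real.rpow_pos_of_pos hk0 _
  have hxa : (0:ℝ) < x ^ α := Real.rpow_pos_of_pos hx0 _
  have hkb : (0:ℝ) < k ^ β := Real.rpow_pos_of_pos hk0 _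
  have hxb : (0:ℝ) < x ^ β := Real.rpow_pos_of_pos hx0 _
  have hkax : k ^ α ≤ x ^ α := Real.rpow_le_rpow hk0.le h1 hα0.le
  have hkbx : k ^ β ≤ x ^ β := Real.rpow_le_rpow hk0.le h1 hβ.le
  have hPa : c * (Z + k ^ β) ≤ ‖z + ((k^β:ℝ):ℂ)‖ := hsec _ hkb.le
  have hQa : c * (Z + x ^ β) ≤ ‖z + ((x^β:ℝ):ℂ)‖ := hsec _ hxb.le
  set Pa := ‖z + ((k^β:ℝ):ℂ)‖ with hPadef
  set Qa := ‖z + ((x^β:ℝ):ℂ)‖ with hQadef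
  have hPa0 : (0:ℝ) < Pa := lt_of_lt_of_le (by positivity) hPa
  have hQa0 : (0:ℝ) < Qa := lt_of_lt_of_le (by positivity) hQa
  have hP : z + ((k^β:ℝ):ℂ) ≠ 0 := by
    intro h; rw [hPadef, h] at hPa0; simp at hPa0
  have hQ : z + ((x^β:ℝ):ℂ) ≠ 0 := by
    intro h; rw [hQadef, h] at hQa0; simp at hQa0
  have hu : ((k^α:ℝ):ℂ) ≠ 0 := by exact_mod_cast hka.ne'
  have hv : ((x^α:ℝ):ℂ) ≠ 0 := by exact_mod_cast hxa.ne'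
  rw [split_frac _ _ _ _ hu hv hP hQ]
  have habs1 : ‖(((x^α:ℝ):ℂ) - ((k^α:ℝ):ℂ)) / (((k^α:ℝ):ℂ) * ((x^α:ℝ):ℂ) *
      (z + ((k^β:ℝ):ℂ)))‖ = (x^α - k^α) / (k^α * x^α * Pa) := by
    rw [norm_div, norm_mul, norm_mul, ← Complex.ofReal_sub, Complex.norm_real, Complex.norm_real,
      Complex.norm_real, Real.norm_eq_abs, Real.norm_eq_abs, Real.norm_eq_abs]
    rw [_root_.abs_of_nonneg (by linarith : (0:ℝ) ≤ x^α - k^α),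
      _root_.abs_of_pos hka, _root_.abs_of_pos hxa]
  have habs2 : ‖((z + ((x^β:ℝ):ℂ)) - (z + ((k^β:ℝ):ℂ))) / (((x^α:ℝ):ℂ) *
      (z + ((k^β:ℝ):ℂ)) * (z + ((x^β:ℝ):ℂ)))‖ = (x^β - k^β) / (x^α * Pa * Qa) := by
    rw [norm_div, norm_mul, norm_mul]
    have : (z + ((x^β:ℝ):ℂ)) - (z + ((k^β:ℝ):ℂ)) = (((x^β - k^β : ℝ)):ℂ) := by
      push_cast; ring
    rw [this, Complex.norm_real, Complex.norm_real, Real.norm_eq_abs, Real.norm_eq_abs,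
      _root_.abs_of_nonneg (by linarith : (0:ℝ) ≤ x^β - k^β),
      _root_.abs_of_pos hxa]
  have hnum1 : x^α - k^α ≤ α * 2^α * k^(α-1) := by
    refine le_trans (rpow_sub_le_aux α k x hα0 hk h1 h2) ?_
    have hco : (0:ℝ) ≤ α * 2^α * k^(α-1) := by positivity
    nlinarith [mul_le_mul_of_nonneg_left (show x - k ≤ 1 by linarith) hco]
  have hnum2 : x^β - k^β ≤ β * 2^β * k^(β-1) := by
    refine le_trans (rpow_sub_le_aux β k x hβ hk h1 h2) ?_
    have hco : (0:ℝ) ≤ β * 2^β * k^(β-1) := by positivity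
    nlinarith [mul_le_mul_of_nonneg_left (show x - k ≤ 1 by linarith) hco]
  have hbound1 : (x^α - k^α) / (k^α * x^α * Pa) ≤ (α * 2^α / c) * k^(-1-α) / Z := by
    have hden : k^α * k^α * (c * Z) ≤ k^α * x^α * Pa := by
      have h5 : c * Z ≤ Pa := le_trans (by nlinarith [mul_pos hc hkb]) hPa
      gcongr
    have heq : α * 2^α * k^(α-1) / (k^α * k^α * (c * Z)) = (α * 2^α / c) * k^(-1-α) / Z := by
      have hkid : k^(α-1) = k^(-1-α) * k^α * k^α := by
        rw [← Real.rpow_add hk0, ← Real.rpow_add hk0]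
        congr 1; ring
      rw [hkid]
      field_simp
    rw [← heq]
    apply div_le_div₀ (by positivity) hnum1 (by positivity) hden
  have hbound2 : (x^β - k^β) / (x^α * Pa * Qa) ≤ (β * 2^β / c^2) * k^(-1-α) / Z := by
    have hden : k^α * (c * k^β) * (c * Z) ≤ x^α * Pa * Qa := by
      have h5 : c * k^β ≤ Pa := le_trans (by nlinarith [mul_pos hc hZ0]) hPa
      have h6 : c * Z ≤ Qa := le_trans (by nlinarith [mul_pos hc hxb]) hQa
      gcongr
    have heq : β * 2^β * k^(β-1) / (k^α * (c * k^β) * (c * Z)) =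
        (β * 2^β / c^2) * k^(-1-α) / Z := by
      have hkid : k^(β-1) = k^(-1-α) * k^α * k^β := by
        rw [← Real.rpow_add hk0, ← Real.rpow_add hk0]
        congr 1; ring
      rw [hkid]
      field_simp
    rw [← heq]
    apply div_le_div₀ (by positivity) hnum2 (by positivity) hden
  calc ‖_‖ ≤ ‖(((x^α:ℝ):ℂ) - ((k^α:ℝ):ℂ)) / (((k^α:ℝ):ℂ) * ((x^α:ℝ):ℂ) *
        (z + ((k^β:ℝ):ℂ)))‖ + ‖((z + ((x^β:ℝ):ℂ)) - (z + ((k^β:ℝ):ℂ))) /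
        (((x^α:ℝ):ℂ) * (z + ((k^β:ℝ):ℂ)) * (z + ((x^β:ℝ):ℂ)))‖ := norm_add_le _ _
    _ ≤ (α * 2^α / c) * k^(-1-α) / Z + (β * 2^β / c^2) * k^(-1-α) / Z := by
        rw [habs1, habs2]; exact add_le_add hbound1 hbound2
    _ = (α * 2^α / c + β * 2^β / c^2) * k^(-1-α) / Z := by ring

lemma sector_bound (d : ℝ) (hd0 : 0 < d) (hd1 : d ≤ 1) (z : ℂ)
    (harg : |z.arg| ≤ Real.pi - d) (t : ℝ) (ht : 0 ≤ t) :
    Real.sqrt ((1 - Real.cos d) / 2) * (‖z‖ + t) ≤ ‖z + t‖ := by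
  set c0 := Real.cos d with hc0def
  have hpi : d ≤ Real.pi := hd1.trans (by linarith [Real.pi_gt_three])
  have hc0lt : c0 < 1 := by
    have := Real.cos_lt_cos_of_nonneg_of_le_pi (le_refl 0) hpi hd0
    simpa using this
  have hc0ge : -1 ≤ c0 := Real.neg_one_le_cos d
  set A := ‖z‖ with hA
  have hA0 : 0 ≤ A := norm_nonneg z
  have hre : -(A * c0) ≤ z.re := by
    have h1 : Real.cos (Real.pi - d) ≤ Real.cos |z.arg| :=
      Real.cos_le_cos_of_nonneg_of_le_pi (abs_nonneg _) (by linarith) harg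
    rw [Real.cos_pi_sub, Real.cos_abs] at h1
    have h2 := Complex.norm_mul_cos_arg z
    nlinarith [mul_le_mul_of_nonneg_left h1 hA0]
  have hsq : ((1 - c0) / 2) * (A + t) ^ 2 ≤ (‖z + t‖) ^ 2 := by
    have e1 : (‖z + t‖) ^ 2 = (z.re + t) ^ 2 + z.im ^ 2 := by
      rw [← Complex.normSq_eq_norm_sq]
      simp [Complex.normSq_apply]
      ring
    have e2 : A ^ 2 = z.re ^ 2 + z.im ^ 2 := by
      rw [hA, ← Complex.normSq_eq_norm_sq]
      simp [Complex.normSq_apply]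
      ring
    rw [e1]
    nlinarith [sq_nonneg (A - t), mul_nonneg (mul_nonneg (by linarith : (0:ℝ) ≤ 1 + c0) ht)
      hA0, sq_nonneg (z.re + t), mul_le_mul_of_nonneg_left hre ht]
  calc Real.sqrt ((1 - c0) / 2) * (A + t)
      = Real.sqrt (((1 - c0) / 2) * (A + t) ^ 2) := by
        rw [Real.sqrt_mul (by linarith) , Real.sqrt_sq (by linarith)]
    _ ≤ Real.sqrt ((‖z + t‖) ^ 2) := Real.sqrt_le_sqrt hsq
    _ = ‖z + t‖ := Real.sqrt_sq (norm_nonneg _)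

lemma union_Ioc : (⋃ n : ℕ, Ioc ((n:ℝ)+1) ((n:ℝ)+2)) = Ioi (1:ℝ) := by
  ext x
  simp only [mem_iUnion, mem_Ioc, mem_Ioi]
  constructor
  · rintro ⟨n, h1, h2⟩
    have : (0:ℝ) ≤ n := Nat.cast_nonneg n
    linarith
  · intro hx
    have h2 : (2:ℤ) ≤ ⌈x⌉ := by
      have : (1:ℤ) < ⌈x⌉ := Int.lt_ceil.mpr (by exact_mod_cast hx)
      omega
    have he : (((⌈x⌉ - 2).toNat : ℕ) : ℝ) = (⌈x⌉:ℝ) - 2 := by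
      rw [← Int.cast_natCast, Int.toNat_of_nonneg (by omega)]
      push_cast; ring
    refine ⟨(⌈x⌉ - 2).toNat, ?_, ?_⟩
    · rw [he]
      have := Int.ceil_lt_add_one (R := ℝ) x
      linarith
    · rw [he]
      have := Int.le_ceil x
      linarith

lemma disj_Ioc : Pairwise (Function.onFun Disjoint (fun n : ℕ => Ioc ((n:ℝ)+1) ((n:ℝ)+2))) := by
  intro m n hmn
  rw [Function.onFun, Set.Ioc_disjoint_Ioc]
  rcases lt_or_gt_of_ne hmn with h | h
  · have : (m:ℝ) + 1 ≤ n := by exact_mod_cast Nat.succ_le_of_lt h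
    exact min_le_iff.mpr (Or.inl (le_max_iff.mpr (Or.inr (by linarith))))
  · have : (n:ℝ) + 1 ≤ m := by exact_mod_cast Nat.succ_le_of_lt h
    exact min_le_iff.mpr (Or.inr (le_max_iff.mpr (Or.inl (by linarith))))


lemma summable_shift (p : ℝ) (hp : 1 < p) : Summable (fun n : ℕ => ((n:ℝ)+1) ^ (-p)) := by
  have h1 : Summable (fun n : ℕ => ((n:ℝ)) ^ (-p)) :=
    Real.summable_nat_rpow.mpr (by linarith)
  have h2 := (summable_nat_add_iff 1).mpr h1
  refine h2.congr fun n => ?_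
  push_cast
  ring_nf

theorem stmt5 (α β δ : ℝ) (hα0 : 0 < α) (hα1 : α ≤ 1) (hβ : 0 < β) (hαβ : 1 < α + β)
    (hδ : 0 < δ) :
    ∃ C : ℝ, ∀ z : ℂ, |z.arg| < Real.pi - δ → 1 ≤ ‖z‖ →
      ‖(∑' k : ℕ, 1 / (((((k : ℝ) + 1) ^ α : ℝ) : ℂ) * (z + ((((k : ℝ) + 1) ^ β : ℝ) : ℂ))))
        - (∫ x in Set.Ioi (1 : ℝ), 1 / (((x ^ α : ℝ) : ℂ) * (z + ((x ^ β : ℝ) : ℂ))))‖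
      ≤ C / ‖z‖ := by
  set d := min δ 1 with hd
  have hd0 : 0 < d := lt_min hδ one_pos
  have hd1 : d ≤ 1 := min_le_right _ _
  set c := Real.sqrt ((1 - Real.cos d) / 2) with hcdef
  have hcos : Real.cos d < 1 := by
    have := Real.cos_lt_cos_of_nonneg_of_le_pi (le_refl 0) (hd1.trans (by linarith [Real.pi_gt_three])) hd0
    simpa using this
  have hc : 0 < c := Real.sqrt_pos.mpr (by linarith)
  set M := α * 2^α / c + β * 2^β / c^2 with hM
  set S := ∑' n : ℕ, ((n:ℝ)+1) ^ (-1-α) with hS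
  have hSsum : Summable (fun n : ℕ => ((n:ℝ)+1) ^ (-1-α)) := by
    have := summable_shift (1+α) (by linarith)
    refine this.congr fun n => ?_
    congr 1
    ring
  refine ⟨M * S, ?_⟩
  intro z hargz habsz
  set Z := ‖z‖ with hZ
  have hZ0 : (0:ℝ) < Z := lt_of_lt_of_le one_pos habsz
  have hsec : ∀ t : ℝ, 0 ≤ t → c * (Z + t) ≤ ‖z + t‖ := by
    intro t ht
    exact sector_bound d hd0 hd1 z (le_of_lt (lt_of_lt_of_le hargz (by
      have : d ≤ δ := min_le_left _ _
      linarith))) t ht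
  set f : ℝ → ℂ := fun x => 1 / (((x^α : ℝ):ℂ) * (z + ((x^β : ℝ):ℂ))) with hf
  -- norm bound on f
  have hfb : ∀ x : ℝ, 1 ≤ x → ‖f x‖ ≤ (1/c) * x ^ (-(α+β)) := by
    intro x hx
    have hx0 : (0:ℝ) < x := lt_of_lt_of_le one_pos hx
    have hxa : (0:ℝ) < x ^ α := Real.rpow_pos_of_pos hx0 _
    have hxb : (0:ℝ) < x ^ β := Real.rpow_pos_of_pos hx0 _
    have hsec' := hsec _ hxb.le
    have hP0 : (0:ℝ) < ‖z + ((x^β:ℝ):ℂ)‖ := lt_of_lt_of_le (by positivity) hsec'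
    have : ‖f x‖ = 1 / (x^α * ‖z + ((x^β:ℝ):ℂ)‖) := by
      rw [hf]
      simp only [norm_div, norm_one, norm_mul, Complex.norm_real, Real.norm_eq_abs,
        _root_.abs_of_pos hxa]
    rw [this]
    have hden : x^α * (c * x^β) ≤ x^α * ‖z + ((x^β:ℝ):ℂ)‖ := by
      have : c * x^β ≤ ‖z + ((x^β:ℝ):ℂ)‖ :=
        le_trans (by nlinarith [mul_pos hc hZ0]) hsec'
      nlinarith
    have heq : 1 / (x^α * (c * x^β)) = (1/c) * x ^ (-(α+β)) := by
      rw [Real.rpow_neg hx0.le, Real.rpow_add hx0]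
      field_simp
    rw [← heq]
    apply one_div_le_one_div_of_le (by positivity) hden
  -- continuity and integrability of f on Ioi 1
  have hcont : ContinuousOn f (Ioi 1) := by
    apply ContinuousOn.div continuousOn_const
    · apply ContinuousOn.mul
      · exact Complex.continuous_ofReal.comp_continuousOn
          (fun x hx => (Real.continuousAt_rpow_const x α
            (Or.inl (ne_of_gt (lt_trans one_pos hx)))).continuousWithinAt)
      · exact continuousOn_const.add (Complex.continuous_ofReal.comp_continuousOn
          (fun x hx => (Real.continuousAt_rpow_const x β
            (Or.inl (ne_of_gt (lt_trans one_pos hx)))).continuousWithinAt))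
    · intro x hx
      have hx0 : (0:ℝ) < x := lt_trans one_pos hx
      have hxa : (0:ℝ) < x ^ α := Real.rpow_pos_of_pos hx0 _
      have hxb : (0:ℝ) < x ^ β := Real.rpow_pos_of_pos hx0 _
      have hsec' := hsec _ hxb.le
      have hP0 : (0:ℝ) < ‖z + ((x^β:ℝ):ℂ)‖ := lt_of_lt_of_le (by positivity) hsec'
      intro h
      rw [mul_eq_zero] at h
      rcases h with h | h
      · exact hxa.ne' (by exact_mod_cast h)
      · rw [h] at hP0; simp at hP0
  have hint : IntegrableOn f (Ioi 1) := by
    apply Integrable.mono' ((integrableOn_Ioi_rpow_of_lt (by linarith : -(α+β) < -1)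
      one_pos).const_mul (1/c))
    · exact hcont.aestronglyMeasurable measurableSet_Ioi
    · exact (ae_restrict_iff' measurableSet_Ioi).mpr (ae_of_all _ fun x hx => hfb x (le_of_lt hx))
  -- the sum over intervals
  set I : ℕ → ℂ := fun n => ∫ x in Ioc ((n:ℝ)+1) ((n:ℝ)+2), f x with hI
  have hIsum : HasSum I (∫ x in Ioi (1:ℝ), f x) := by
    have := hasSum_integral_iUnion (μ := volume) (f := f)
      (s := fun n : ℕ => Ioc ((n:ℝ)+1) ((n:ℝ)+2))
      (fun n => measurableSet_Ioc) disj_Ioc (by rw [union_Ioc]; exact hint)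
    rwa [union_Ioc] at this
  set a : ℕ → ℂ := fun n => f ((n:ℝ)+1) with ha
  have hasum : Summable a :=
    Summable.of_norm <| Summable.of_nonneg_of_le (fun n => norm_nonneg _)
      (fun n => hfb ((n:ℝ)+1) (le_add_of_nonneg_left (Nat.cast_nonneg n)))
      ((summable_shift (α+β) hαβ).mul_left (1/c))
  -- term bound
  have hterm : ∀ n : ℕ, ‖a n - I n‖ ≤ M * ((n:ℝ)+1) ^ (-1-α) / Z := by
    intro n
    set k : ℝ := (n:ℝ)+1 with hk
    have hk1 : (1:ℝ) ≤ k := le_add_of_nonneg_left (Nat.cast_nonneg n)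
    have hsub : Ioc k (k+1) ⊆ Ioi 1 := fun x hx => lt_of_le_of_lt hk1 hx.1
    have hIoc : I n = ∫ x in Ioc k (k+1), f x := by
      simp only [hI, hk, show (n:ℝ)+2 = ((n:ℝ)+1)+1 from by ring]
    have hvol : (volume (Ioc k (k+1))).toReal = 1 := by
      rw [Real.volume_Ioc]
      norm_num
    have hconst : ∫ _ in Ioc k (k+1), f k = a n := by
      rw [setIntegral_const, measureReal_def, hvol, one_smul]
    have hdiff : a n - I n = ∫ x in Ioc k (k+1), (f k - f x) := by
      rw [integral_sub (integrableOn_const (s := Ioc k (k+1)) (μ := volume) (C := f k) (by rw [Real.volume_Ioc]; norm_num))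
        (hint.mono_set hsub), hconst, hIoc]
    rw [hdiff]
    have := norm_setIntegral_le_of_norm_le_const (μ := volume) (s := Ioc k (k+1))
      (f := fun x => f k - f x) (C := M * k ^ (-1-α) / Z)
      (by rw [Real.volume_Ioc]; norm_num)
      (fun x hx => by
        simpa [hf, hM, hZ] using
          pointwise_bound α β hα0 hα1 hβ z habsz c hc hsec k x hk1 hx.1.le hx.2)
    rw [measureReal_def, hvol, mul_one] at this
    exact this
  -- assemble
  have hIsummable : Summable I := hIsum.summable
  have key : (∑' n, a n) - (∫ x in Ioi (1:ℝ), f x) = ∑' n, (a n - I n) := by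
    rw [← hIsum.tsum_eq, Summable.tsum_sub hasum hIsummable]
  rw [show (∑' k : ℕ, 1 / (((((k : ℝ) + 1) ^ α : ℝ) : ℂ) * (z + ((((k : ℝ) + 1) ^ β : ℝ) : ℂ))))
        - (∫ x in Set.Ioi (1 : ℝ), 1 / (((x ^ α : ℝ) : ℂ) * (z + ((x ^ β : ℝ) : ℂ))))
      = ∑' n, (a n - I n) from key]
  have hbsum : HasSum (fun n : ℕ => M * ((n:ℝ)+1) ^ (-1-α) / Z) (M * S / Z) := by
    have h := hSsum.hasSum.mul_left (M / Z)
    have hfun : (fun n : ℕ => M * ((n:ℝ)+1)^(-1-α)/Z) =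
        fun n : ℕ => (M/Z) * ((n:ℝ)+1)^(-1-α) := by
      funext n; ring
    have hval : M * S / Z = (M/Z) * S := by ring
    rw [hfun, hval]
    exact h
  exact tsum_of_norm_bounded hbsum hterm
end

section
/- Let α = 1 and β > 0, so r = (α + β − 1)/β = 1, and fix δ > 0. Define K(z) = Σ_{k=1}^∞ 1/(k (z + k^β)). Then there exists C such that for all z with |arg z| < π − δ and |z| ≥ 2, |K(z) − (1/β) Log(1 + z)/z| ≤ C/|z|. -/
open Complex Real MeasureTheory Set Filter

-- sector lower bound
lemma sector_lb (δ' : ℝ) (hδ : 0 < δ') (hδ2 : δ' ≤ π/2) (z : ℂ)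
    (hz0 : z ≠ 0) (harg : |z.arg| < π - δ') (x : ℝ) (hx : 0 ≤ x) :
    Real.sqrt ((1 - Real.cos δ')/2) * (‖z‖ + x) ≤ ‖z + x‖ := by
  have hcos : Real.cos (π - δ') ≤ Real.cos |z.arg| := by
    apply Real.cos_le_cos_of_nonneg_of_le_pi (abs_nonneg _) (by linarith [Real.pi_pos])
    linarith
  rw [Real.cos_pi_sub] at hcos
  have hcosarg : Real.cos z.arg = Real.cos |z.arg| := by
    rcases abs_cases z.arg with ⟨h, _⟩ | ⟨h, _⟩
    · rw [h]
    · rw [h, Real.cos_neg]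
  have hre : -Real.cos δ' * ‖z‖ ≤ z.re := by
    have := Complex.cos_arg hz0
    have habs : (0:ℝ) < ‖z‖ := norm_pos_iff.mpr hz0
    rw [hcosarg] at this
    have hre' : z.re = Real.cos |z.arg| * ‖z‖ := by
      field_simp at this; linarith [this]
    nlinarith [hcos]
  have hu1 : Real.cos δ' < 1 := by
    have := Real.cos_lt_cos_of_nonneg_of_le_pi le_rfl (by linarith [Real.pi_pos]) hδ
    simpa using this
  have hu0 : 0 ≤ Real.cos δ' := Real.cos_nonneg_of_mem_Icc ⟨by linarith, hδ2⟩
  have key : ((1 - Real.cos δ')/2) * (‖z‖ + x)^2 ≤ ‖z + x‖^2 := by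
    have h1 : ‖z+x‖^2 = (z.re + x)^2 + z.im^2 := by
      rw [Complex.sq_norm, Complex.normSq_apply]
      simp [Complex.add_re, Complex.add_im]
      ring
    have h2 : ‖z‖^2 = z.re^2 + z.im^2 := by
      rw [Complex.sq_norm, Complex.normSq_apply]; ring
    have habs : (0:ℝ) ≤ ‖z‖ := by positivity
    nlinarith [hre, hu1, hu0, sq_nonneg (‖z‖ - x)]
  have h3 : Real.sqrt ((1 - Real.cos δ')/2) * (‖z‖ + x)
      = Real.sqrt (((1 - Real.cos δ')/2) * (‖z‖ + x)^2) := by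
    rw [Real.sqrt_mul (by linarith)]
    rw [Real.sqrt_sq (by positivity)]
  rw [h3]
  calc Real.sqrt (((1 - Real.cos δ')/2) * (‖z‖ + x)^2)
      ≤ Real.sqrt (‖z + x‖^2) := Real.sqrt_le_sqrt key
    _ = ‖z + x‖ := Real.sqrt_sq (by positivity)

lemma inner_deriv (z : ℂ) (β t : ℝ) (ht : 0 < t) :
    HasDerivAt (fun s : ℝ => z + (((s^β : ℝ)) : ℂ)) (((β * t^(β-1) : ℝ) : ℂ)) t :=
  ((Real.hasDerivAt_rpow_const (Or.inl ht.ne')).ofReal_comp).const_add z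

lemma tmul (β t : ℝ) (ht : 0 < t) :
    (t:ℂ) * (((β * t^(β-1) : ℝ)) : ℂ) = (β:ℂ) * (((t^β : ℝ)) : ℂ) := by
  have h := Real.rpow_add ht 1 (β-1)
  rw [Real.rpow_one, show (1:ℝ)+(β-1) = β by ring] at h
  rw [eq_comm] at h
  push_cast
  rw [show (t:ℂ) * ((β:ℂ) * (t^(β-1):ℝ)) = (β:ℂ) * ((t:ℂ) * ((t^(β-1):ℝ):ℂ)) by ring]
  norm_cast
  rw [h]

lemma g_deriv (z : ℂ) (β t : ℝ) (ht : 0 < t) (hne : z + (((t^β:ℝ)) : ℂ) ≠ 0) :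
    HasDerivAt (fun s : ℝ => 1 / ((s:ℂ) * (z + (((s^β:ℝ)) : ℂ))))
      (-(z + (1+(β:ℂ)) * (((t^β:ℝ)) : ℂ)) / ((t:ℂ) * (z + (((t^β:ℝ)) : ℂ)))^2) t := by
  have h1 : HasDerivAt (fun s : ℝ => ((s:ℝ):ℂ)) 1 t := (hasDerivAt_id t).ofReal_comp
  have h5 := h1.mul (inner_deriv z β t ht)
  have h6 := (hasDerivAt_const t (1:ℂ)).div h5
    (mul_ne_zero (by exact_mod_cast ht.ne' : (t:ℂ) ≠ 0) hne)
  convert h6 using 1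
  · rfl
  · rfl
  simp only [Pi.mul_apply]
  rw [show ((0:ℂ) * ((t:ℂ) * (z + ((t^β:ℝ):ℂ))) - 1 * (1 * (z + ((t^β:ℝ):ℂ)) + (t:ℂ) * ((β * t^(β-1) : ℝ):ℂ)))
      = -((z + ((t^β:ℝ):ℂ)) + (t:ℂ) * ((β * t^(β-1):ℝ):ℂ)) by ring, tmul β t ht]
  ring

lemma G_deriv (z : ℂ) (β t : ℝ) (hβ : β ≠ 0) (ht : 0 < t) (hz : z ≠ 0)
    (hslit : z + (((t^β:ℝ)) : ℂ) ∈ Complex.slitPlane) :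
    HasDerivAt (fun s : ℝ => (1/z) * (((Real.log s : ℝ) : ℂ) - (1/(β:ℂ)) * Complex.log (z + (((s^β:ℝ)) : ℂ))))
      (1 / ((t:ℂ) * (z + (((t^β:ℝ)) : ℂ)))) t := by
  have hne : z + (((t^β:ℝ)) : ℂ) ≠ 0 := Complex.slitPlane_ne_zero hslit
  have hlog1 : HasDerivAt (fun s : ℝ => ((Real.log s : ℝ) : ℂ)) (((t⁻¹ : ℝ) : ℂ)) t :=
    (Real.hasDerivAt_log ht.ne').ofReal_comp
  have hlog2 := (Complex.hasDerivAt_log hslit).scomp t (inner_deriv z β t ht)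
  have hcomb := ((hlog1.sub (hlog2.const_mul (1/(β:ℂ)))).const_mul (1/z))
  convert hcomb using 1
  · rfl
  · rfl
  have hw : (t:ℂ) * (((t^(β-1):ℝ)) : ℂ) = (((t^β:ℝ)) : ℂ) := by
    have h := Real.rpow_add ht 1 (β-1)
    rw [Real.rpow_one, show (1:ℝ)+(β-1) = β by ring] at h
    norm_cast
    rw [← h]
  have htne : (t:ℂ) ≠ 0 := by exact_mod_cast ht.ne'
  have hβc : (β:ℂ) ≠ 0 := by exact_mod_cast hβ
  rw [smul_eq_mul]
  have hcast : ((β * t^(β-1) : ℝ) : ℂ) = (β:ℂ) * (((t^(β-1):ℝ)):ℂ) := by push_cast; ring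
  rw [hcast]
  have hu : (((t^(β-1):ℝ)):ℂ) = (((t^β:ℝ)):ℂ) / (t:ℂ) := by
    rw [eq_div_iff htne, mul_comm]; exact hw
  rw [hu]
  have hrinv : ((t⁻¹:ℝ):ℂ) = (t:ℂ)⁻¹ := by push_cast; rfl
  rw [hrinv]
  field_simp
  ring

set_option maxHeartbeats 2000000 in
lemma key (β δ' : ℝ) (hβ : 0 < β) (hδ : 0 < δ') (hδ2 : δ' ≤ π/2) (z : ℂ)
    (harg : |z.arg| < π - δ') (hz2 : 2 ≤ ‖z‖) :
    ‖(∑' k : ℕ, 1 / ((((k : ℝ) + 1 : ℝ) : ℂ) * (z + ((((k : ℝ) + 1) ^ β : ℝ) : ℂ))))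
        - (1 / (β : ℂ)) * Complex.log (1 + z) / z‖
      ≤ ((1+β) / (Real.sqrt ((1 - Real.cos δ')/2))^2 * (∑' k : ℕ, 1/((k:ℝ)+1)^2))
        / ‖z‖ := by
  set c : ℝ := Real.sqrt ((1 - Real.cos δ')/2) with hc_def
  have hcos1 : Real.cos δ' < 1 := by
    have := Real.cos_lt_cos_of_nonneg_of_le_pi le_rfl (by linarith [Real.pi_pos]) hδ
    simpa using this
  have hc : 0 < c := Real.sqrt_pos.mpr (by linarith)
  have hzabs : (0:ℝ) < ‖z‖ := by linarith
  have hz0 : z ≠ 0 := by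
    intro h; rw [h] at hzabs; simp at hzabs
  have hlow : ∀ x : ℝ, 0 ≤ x → c * (‖z‖ + x) ≤ ‖z + x‖ :=
    sector_lb δ' hδ hδ2 z hz0 harg
  have hne : ∀ x : ℝ, 0 ≤ x → z + (x:ℂ) ≠ 0 := by
    intro x hx h
    have := hlow x hx
    rw [h] at this
    simp only [norm_zero] at this
    nlinarith
  have hslit : ∀ x : ℝ, 0 ≤ x → z + (x:ℂ) ∈ Complex.slitPlane := by
    intro x hx
    by_cases him : z.im = 0
    · left
      have hre : 0 < z.re := by
        rcases lt_trichotomy z.re 0 with h | h | h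
        · exfalso
          have : z.arg = π := Complex.arg_eq_pi_iff.mpr ⟨h, him⟩
          rw [this] at harg
          rw [abs_of_pos Real.pi_pos] at harg
          linarith
        · exact absurd (Complex.ext h him) hz0
        · exact h
      simp only [Complex.add_re, Complex.ofReal_re]
      linarith
    · right
      simp only [Complex.add_im, Complex.ofReal_im, add_zero]
      exact him
  -- the functions
  set g : ℝ → ℂ := fun t => 1 / ((t:ℂ) * (z + (((t^β:ℝ)) : ℂ))) with hg_def
  set G : ℝ → ℂ := fun t =>
    (1/z) * (((Real.log t : ℝ) : ℂ) - (1/(β:ℂ)) * Complex.log (z + (((t^β:ℝ)) : ℂ))) with hG_def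
  have hgd : ∀ t : ℝ, 1 ≤ t → HasDerivAt g
      (-(z + (1+(β:ℂ)) * (((t^β:ℝ)) : ℂ)) / ((t:ℂ) * (z + (((t^β:ℝ)) : ℂ)))^2) t :=
    fun t ht => g_deriv z β t (by linarith) (hne _ (Real.rpow_nonneg (by linarith) _))
  have hGd : ∀ t : ℝ, 1 ≤ t → HasDerivAt G (g t) t :=
    fun t ht => G_deriv z β t hβ.ne' (by linarith) hz0
      (hslit _ (Real.rpow_nonneg (by linarith) _))
  have hgc : ContinuousOn g (Set.Ici 1) :=
    fun t ht => ((hgd t ht).continuousAt).continuousWithinAt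
  have hgi : ∀ a b : ℝ, 1 ≤ a → a ≤ b → IntervalIntegrable g volume a b := by
    intro a b ha hab
    apply ContinuousOn.intervalIntegrable
    apply hgc.mono
    rw [Set.uIcc_of_le hab]
    intro t ht
    exact le_trans ha ht.1
  have hFTC : ∀ b : ℝ, 1 ≤ b → (∫ t in (1:ℝ)..b, g t) = G b - G 1 := by
    intro b hb
    apply intervalIntegral.integral_eq_sub_of_hasDerivAt
    · intro t ht
      rw [Set.uIcc_of_le hb] at ht
      exact hGd t ht.1
    · exact hgi 1 b le_rfl hb
  have hadj : ∀ N : ℕ, ∑ k ∈ Finset.range N, (∫ t in ((k:ℝ)+1)..((k:ℝ)+2), g t)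
      = ∫ t in (1:ℝ)..((N:ℝ)+1), g t := by
    intro N
    have := intervalIntegral.sum_integral_adjacent_intervals (a := fun k : ℕ => (k:ℝ)+1)
      (f := g) (μ := volume) (n := N) ?_
    · convert this using 2 with k
      · push_cast; ring_nf
      · norm_num
    · intro k _
      have h1 : (1:ℝ) ≤ (k:ℝ)+1 := by linarith [Nat.cast_nonneg (α := ℝ) k]
      have h2 : ((k:ℝ)+1) ≤ ((k+1:ℕ):ℝ)+1 := by push_cast; linarith
      exact hgi _ _ h1 h2
  set d : ℕ → ℂ := fun k => g ((k:ℝ)+1) - ∫ t in ((k:ℝ)+1)..((k:ℝ)+2), g t with hd_def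
  set B : ℕ → ℝ := fun k => (1+β)/c^2 * (1/((k:ℝ)+1)^2) * (‖z‖)⁻¹ with hB_def
  -- derivative bound on [k+1, k+2]
  have hgprime_bound : ∀ k : ℕ, ∀ t : ℝ, (k:ℝ)+1 ≤ t → t ≤ (k:ℝ)+2 →
      ‖-(z + (1+(β:ℂ)) * (((t^β:ℝ)) : ℂ)) / ((t:ℂ) * (z + (((t^β:ℝ)) : ℂ)))^2‖
        ≤ B k := by
    intro k t ht1 ht2
    have hk0 : (0:ℝ) ≤ (k:ℝ) := Nat.cast_nonneg k
    have ht1' : (1:ℝ) ≤ t := by linarith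
    have ht0 : (0:ℝ) < t := by linarith
    have htb : (0:ℝ) < t^β := Real.rpow_pos_of_pos ht0 _
    have hlo := hlow (t^β) htb.le
    have hnum : ‖-(z + (1+(β:ℂ)) * (((t^β:ℝ)) : ℂ))‖
        ≤ (1+β) * (‖z‖ + t^β) := by
      rw [norm_neg]
      calc ‖z + (1+(β:ℂ)) * (((t^β:ℝ)) : ℂ)‖
          ≤ ‖z‖ + ‖(1+(β:ℂ)) * (((t^β:ℝ)) : ℂ)‖ := norm_add_le _ _
        _ = ‖z‖ + (1+β) * t^β := by
            rw [norm_mul]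
            rw [show (1+(β:ℂ)) = (((1+β:ℝ)):ℂ) by push_cast; ring]
            rw [Complex.norm_real, Complex.norm_real, Real.norm_eq_abs, Real.norm_eq_abs, abs_of_pos (by linarith),
              abs_of_pos htb]
        _ ≤ (1+β) * (‖z‖ + t^β) := by nlinarith
    set w : ℂ := (((t^β:ℝ)) : ℂ) with hw_def
    set A : ℝ := ‖z‖ + t^β with hA_def
    have hA : 0 < A := by positivity
    have hden : t * (c * A) ≤ ‖(t:ℂ) * (z + w)‖ := by
      rw [norm_mul, Complex.norm_real, Real.norm_eq_abs, abs_of_pos ht0]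
      exact mul_le_mul_of_nonneg_left hlo ht0.le
    have habs_eq : ‖-(z + (1+(β:ℂ)) * w) / ((t:ℂ) * (z + w))^2‖
        = ‖-(z + (1+(β:ℂ)) * w)‖ / (‖(t:ℂ) * (z + w)‖)^2 := by
      rw [norm_div, norm_pow]
    rw [habs_eq]
    have step1 : ‖-(z + (1+(β:ℂ)) * w)‖ / (‖(t:ℂ) * (z + w)‖)^2
        ≤ ((1+β) * A) / ((t * (c * A))^2) := by
      apply div_le_div₀ (by positivity) hnum (by positivity)
      exact pow_le_pow_left₀ (by positivity) hden 2
    have step2 : ((1+β) * A) / ((t * (c * A))^2) = (1+β) / (c^2 * t^2 * A) := by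
      field_simp
    have step3 : (1+β) / (c^2 * t^2 * A) ≤ (1+β) / (c^2 * ((k:ℝ)+1)^2 * ‖z‖) := by
      apply div_le_div_of_nonneg_left (by linarith) (by positivity)
      have h1 : ((k:ℝ)+1)^2 ≤ t^2 := by nlinarith
      have h2 : ‖z‖ ≤ A := by rw [hA_def]; linarith
      have h3 : ((k:ℝ)+1)^2 * ‖z‖ ≤ t^2 * A :=
        mul_le_mul h1 h2 hzabs.le (sq_nonneg t)
      calc c^2 * ((k:ℝ)+1)^2 * ‖z‖
          = c^2 * (((k:ℝ)+1)^2 * ‖z‖) := by ring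
        _ ≤ c^2 * (t^2 * A) := mul_le_mul_of_nonneg_left h3 (sq_nonneg c)
        _ = c^2 * t^2 * A := by ring
    have step4 : (1+β) / (c^2 * ((k:ℝ)+1)^2 * ‖z‖) = B k := by
      rw [hB_def]
      field_simp
    calc ‖-(z + (1+(β:ℂ)) * w)‖ / (‖(t:ℂ) * (z + w)‖)^2
        ≤ ((1+β) * A) / ((t * (c * A))^2) := step1
      _ = (1+β) / (c^2 * t^2 * A) := step2
      _ ≤ (1+β) / (c^2 * ((k:ℝ)+1)^2 * ‖z‖) := step3
      _ = B k := step4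
  have hB_nonneg : ∀ k : ℕ, 0 ≤ B k := by
    intro k
    rw [hB_def]
    positivity
  have hd_bound : ∀ k : ℕ, ‖d k‖ ≤ B k := by
    intro k
    have hk1 : (1:ℝ) ≤ (k:ℝ)+1 := by linarith [Nat.cast_nonneg (α := ℝ) k]
    have hii : IntervalIntegrable g volume ((k:ℝ)+1) ((k:ℝ)+2) := hgi _ _ hk1 (by linarith)
    have heq : d k = ∫ t in ((k:ℝ)+1)..((k:ℝ)+2), (g ((k:ℝ)+1) - g t) := by
      rw [intervalIntegral.integral_sub intervalIntegrable_const hii,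
        intervalIntegral.integral_const, hd_def]
      norm_num
    rw [heq]
    have hmvt : ∀ t ∈ Set.uIoc ((k:ℝ)+1) ((k:ℝ)+2), ‖g ((k:ℝ)+1) - g t‖ ≤ B k := by
      intro t ht
      rw [Set.uIoc_of_le (by linarith : ((k:ℝ)+1) ≤ (k:ℝ)+2)] at ht
      have ht1 : (k:ℝ)+1 ≤ t := ht.1.le
      have ht2 : t ≤ (k:ℝ)+2 := ht.2
      have hmem : t ∈ Set.Icc ((k:ℝ)+1) ((k:ℝ)+2) := ⟨ht1, ht2⟩
      have hmem1 : ((k:ℝ)+1) ∈ Set.Icc ((k:ℝ)+1) ((k:ℝ)+2) := ⟨le_refl _, by linarith⟩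
      have key := (convex_Icc ((k:ℝ)+1) ((k:ℝ)+2)).norm_image_sub_le_of_norm_hasDerivWithin_le
        (f := g)
        (f' := fun x => (-(z + (1+(β:ℂ)) * (((x^β:ℝ)) : ℂ)) / ((x:ℂ) * (z + (((x^β:ℝ)) : ℂ)))^2))
        (C := B k)
        (fun x hx => (hgd x (le_trans hk1 hx.1)).hasDerivWithinAt)
        (fun x hx => hgprime_bound k x hx.1 hx.2) hmem1 hmem
      rw [norm_sub_rev]
      calc ‖g t - g ((k:ℝ)+1)‖ ≤ B k * ‖t - ((k:ℝ)+1)‖ := key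
        _ ≤ B k * 1 := by
            apply mul_le_mul_of_nonneg_left _ (hB_nonneg k)
            rw [Real.norm_eq_abs, _root_.abs_of_nonneg (by linarith)]
            linarith
        _ = B k := mul_one _
    have hb := intervalIntegral.norm_integral_le_of_norm_le_const hmvt
    calc ‖∫ t in ((k:ℝ)+1)..((k:ℝ)+2), (g ((k:ℝ)+1) - g t)‖
        ≤ B k * |((k:ℝ)+2) - ((k:ℝ)+1)| := hb
      _ = B k := by norm_num
  have hS2 : Summable (fun k : ℕ => 1/((k:ℝ)+1)^2) := by
    have h0 : Summable (fun n : ℕ => 1/(n:ℝ)^2) := summable_one_div_nat_pow.mpr one_lt_two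
    have h := (summable_nat_add_iff 1).mpr h0
    apply h.congr
    intro k
    push_cast
    ring
  have hBsum : Summable B := (hS2.mul_left ((1+β)/c^2)).mul_right (‖z‖)⁻¹
  have hd_sum : Summable d :=
    Summable.of_norm (Summable.of_nonneg_of_le (fun k => norm_nonneg _) hd_bound hBsum)
  have ha_sum : Summable (fun k : ℕ => g ((k:ℝ)+1)) := by
    apply Summable.of_norm
    have hmaj : Summable (fun k : ℕ => (1/c) * (1/((k:ℝ)+1)^(1+β:ℝ))) := by
      apply Summable.mul_left
      have h0 := Real.summable_one_div_nat_rpow.mpr (show (1:ℝ) < 1+β by linarith)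
      have h := (summable_nat_add_iff 1).mpr h0
      apply h.congr
      intro k
      push_cast
      ring
    apply Summable.of_nonneg_of_le (fun k => norm_nonneg _) _ hmaj
    intro k
    set t : ℝ := (k:ℝ)+1 with ht_def
    have hk1 : (1:ℝ) ≤ t := by rw [ht_def]; linarith [Nat.cast_nonneg (α := ℝ) k]
    have ht0 : (0:ℝ) < t := by linarith
    have htb : (0:ℝ) < t^β := Real.rpow_pos_of_pos ht0 _
    have hlo := hlow (t^β) htb.le
    have hnorm : ‖g t‖ = 1 / (t * ‖z + (((t^β:ℝ)) : ℂ)‖) := by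
      rw [hg_def]
      simp only [norm_div, norm_one, norm_mul, Complex.norm_real, Real.norm_eq_abs,
        abs_of_pos ht0]
    rw [hnorm]
    have h1 : t * (c * t^β) ≤ t * ‖z + (((t^β:ℝ)) : ℂ)‖ := by
      apply mul_le_mul_of_nonneg_left _ ht0.le
      calc c * t^β ≤ c * (‖z‖ + t^β) := by nlinarith
        _ ≤ ‖z + (((t^β:ℝ)) : ℂ)‖ := hlo
    calc 1 / (t * ‖z + (((t^β:ℝ)) : ℂ)‖) ≤ 1 / (t * (c * t^β)) := by
          apply div_le_div_of_nonneg_left one_pos.le (by positivity) h1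
      _ = (1/c) * (1/t^(1+β:ℝ)) := by
          rw [Real.rpow_add ht0, Real.rpow_one]
          field_simp
  have hid : ∀ T : ℝ, 1 ≤ T → G T = -(1/((β:ℂ)*z)) * Complex.log (1 + z / (((T^β:ℝ)) : ℂ)) := by
    intro T hT
    have hT0 : (0:ℝ) < T := by linarith
    have hTb : (0:ℝ) < T^β := Real.rpow_pos_of_pos hT0 _
    have hTbC : (((T^β:ℝ)) : ℂ) ≠ 0 := by exact_mod_cast hTb.ne'
    have hfact : z + (((T^β:ℝ)) : ℂ) = (((T^β:ℝ)) : ℂ) * (1 + z/(((T^β:ℝ)) : ℂ)) := by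
      field_simp
      ring
    have hne1 : (1:ℂ) + z / (((T^β:ℝ)) : ℂ) ≠ 0 := by
      intro h
      apply hne (T^β) hTb.le
      rw [hfact, h, mul_zero]
    have hlogmul : Complex.log (z + (((T^β:ℝ)) : ℂ))
        = Real.log (T^β) + Complex.log (1 + z/(((T^β:ℝ)) : ℂ)) := by
      rw [hfact]
      exact Complex.log_ofReal_mul hTb hne1
    have hlogT : Real.log (T^β) = β * Real.log T := Real.log_rpow hT0 β
    have hβc : (β:ℂ) ≠ 0 := by exact_mod_cast hβ.ne'
    rw [hG_def]
    simp only
    rw [hlogmul, hlogT]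
    push_cast
    field_simp
    ring
  have hGlim : Tendsto (fun N : ℕ => G ((N:ℝ)+1)) atTop (nhds 0) := by
    have h1 : Tendsto (fun N : ℕ => ((N:ℝ)+1)^β) atTop atTop :=
      (tendsto_rpow_atTop hβ).comp
        (tendsto_atTop_add_const_right atTop 1 tendsto_natCast_atTop_atTop)
    have h2 : Tendsto (fun N : ℕ => z / ((((((N:ℝ)+1)^β) :ℝ)) : ℂ)) atTop (nhds 0) := by
      have h3 : Tendsto (fun N : ℕ => ((((N:ℝ)+1)^β)⁻¹ : ℝ)) atTop (nhds 0) :=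
        h1.inv_tendsto_atTop
      have h4 : Tendsto (fun N : ℕ => (((((N:ℝ)+1)^β)⁻¹ : ℝ) : ℂ)) atTop (nhds (((0:ℝ):ℂ))) :=
        (Complex.continuous_ofReal.tendsto 0).comp h3
      have h5 := h4.const_mul z
      simp only [Complex.ofReal_zero, mul_zero] at h5
      apply h5.congr
      intro N
      rw [Complex.ofReal_inv, div_eq_mul_inv]
    have h6 : Tendsto (fun N : ℕ => (1:ℂ) + z / ((((((N:ℝ)+1)^β) :ℝ)) : ℂ)) atTop (nhds 1) := by
      have := tendsto_const_nhds (x := (1:ℂ)) (f := atTop (α := ℕ))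
      simpa using this.add h2
    have h7 : Tendsto (fun N : ℕ => Complex.log (1 + z / ((((((N:ℝ)+1)^β) :ℝ)) : ℂ))) atTop (nhds 0) := by
      have hcont : ContinuousAt Complex.log 1 := continuousAt_clog one_mem_slitPlane
      have := hcont.tendsto.comp h6
      rw [Complex.log_one] at this
      exact this
    have h8 := h7.const_mul (-(1/((β:ℂ)*z)))
    rw [mul_zero] at h8
    apply h8.congr
    intro N
    exact (hid ((N:ℝ)+1) (by linarith [Nat.cast_nonneg (α := ℝ) N])).symm
  have hpartial : ∀ N : ℕ, ∑ k ∈ Finset.range N, d k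
      = (∑ k ∈ Finset.range N, g ((k:ℝ)+1)) - ∫ t in (1:ℝ)..((N:ℝ)+1), g t := by
    intro N
    rw [← hadj N, hd_def, Finset.sum_sub_distrib]
  have hlim2 : Tendsto (fun N : ℕ => ∑ k ∈ Finset.range N, d k) atTop
      (nhds ((∑' k : ℕ, g ((k:ℝ)+1)) + G 1)) := by
    have ht1 : Tendsto (fun N : ℕ => ∑ k ∈ Finset.range N, g ((k:ℝ)+1)) atTop
        (nhds (∑' k : ℕ, g ((k:ℝ)+1))) := ha_sum.hasSum.tendsto_sum_nat
    have ht2 : Tendsto (fun N : ℕ => ∫ t in (1:ℝ)..((N:ℝ)+1), g t) atTop (nhds (0 - G 1)) := by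
      apply Tendsto.congr (f₁ := fun N : ℕ => G ((N:ℝ)+1) - G 1)
      · intro N
        exact (hFTC ((N:ℝ)+1) (by linarith [Nat.cast_nonneg (α := ℝ) N])).symm
      · exact hGlim.sub tendsto_const_nhds
    have h7 := (ht1.sub ht2).congr (fun N => (hpartial N).symm)
    simpa [zero_sub, sub_neg_eq_add] using h7
  have htsum_d : ∑' k, d k = (∑' k : ℕ, g ((k:ℝ)+1)) + G 1 :=
    tendsto_nhds_unique hd_sum.hasSum.tendsto_sum_nat hlim2
  have hG1 : G 1 = -((1 / (β : ℂ)) * Complex.log (1 + z) / z) := by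
    rw [hG_def]
    simp only [Real.one_rpow, Real.log_one, Complex.ofReal_one, Complex.ofReal_zero]
    rw [add_comm z 1]
    ring
  have hstmt : (∑' k : ℕ, 1 / ((((k : ℝ) + 1 : ℝ) : ℂ) * (z + ((((k : ℝ) + 1) ^ β : ℝ) : ℂ))))
      = ∑' k : ℕ, g ((k:ℝ)+1) := rfl
  rw [hstmt]
  have hrw : (∑' k : ℕ, g ((k:ℝ)+1)) - (1 / (β : ℂ)) * Complex.log (1 + z) / z = ∑' k, d k := by
    rw [htsum_d, hG1]
    ring
  rw [hrw]
  have hnorm_sum : Summable (fun k => ‖d k‖) :=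
    Summable.of_nonneg_of_le (fun k => norm_nonneg _) hd_bound hBsum
  calc ‖∑' k, d k‖ ≤ ∑' k, ‖d k‖ := norm_tsum_le_tsum_norm hnorm_sum
    _ ≤ ∑' k, B k := Summable.tsum_le_tsum hd_bound hnorm_sum hBsum
    _ = ((1+β) / c^2 * (∑' k : ℕ, 1/((k:ℝ)+1)^2)) / ‖z‖ := by
        rw [hB_def]
        rw [tsum_mul_right, tsum_mul_left, div_eq_mul_inv, div_eq_mul_inv]


theorem stmt7 (β δ : ℝ) (hβ : 0 < β) (hδ : 0 < δ) :
    ∃ C : ℝ, ∀ z : ℂ, |z.arg| < Real.pi - δ → 2 ≤ ‖z‖ →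
      ‖(∑' k : ℕ, 1 / ((((k : ℝ) + 1 : ℝ) : ℂ) * (z + ((((k : ℝ) + 1) ^ β : ℝ) : ℂ))))
        - (1 / (β : ℂ)) * Complex.log (1 + z) / z‖
      ≤ C / ‖z‖ := by
  set δ' : ℝ := min δ (π/2) with hδ'_def
  have hδ' : 0 < δ' := lt_min hδ (by linarith [Real.pi_pos])
  have hδ2 : δ' ≤ π/2 := min_le_right _ _
  refine ⟨(1+β) / (Real.sqrt ((1 - Real.cos δ')/2))^2 * (∑' k : ℕ, 1/((k:ℝ)+1)^2), ?_⟩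
  intro z harg hz2
  apply key β δ' hβ hδ' hδ2 z ?_ hz2
  have := min_le_left δ (π/2)
  calc |z.arg| < π - δ := harg
    _ ≤ π - δ' := by linarith
end

section
/- Let 0 < α ≤ 1, β > 0, α + β > 1, r = (α + β − 1)/β with 0 < r < 1, and fix δ > 0. Define K(z) = Σ_{k=1}^∞ 1/(k^α (z + k^β)). Then there exists C such that for all z with |arg z| < π − δ and |z| ≥ 2, |z K'(z)| ≤ C/|z|^r. -/
open Complex Real MeasureTheory Set Filter

lemma aux_mvt_low {t a b : ℝ} (ht0 : 0 < t) (ht1 : t ≤ 1) (ha : 0 ≤ a) (hab : a ≤ b) :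
    t * b ^ (t - 1) * (b - a) ≤ b ^ t - a ^ t := by
  rcases eq_or_lt_of_le hab with rfl | hab'
  · simp
  have hb : 0 < b := lt_of_le_of_lt ha hab'
  rcases eq_or_lt_of_le ha with rfl | ha'
  · rw [Real.zero_rpow ht0.ne', sub_zero, sub_zero]
    calc t * b ^ (t - 1) * b = t * b ^ t := by
          rw [mul_assoc, ← Real.rpow_add_one hb.ne']; ring_nf
      _ ≤ 1 * b ^ t := by
          apply mul_le_mul_of_nonneg_right ht1 (Real.rpow_nonneg hb.le t)
      _ = b ^ t := one_mul _
  · have hc : ∀ x ∈ Set.Icc a b, HasDerivAt (fun y : ℝ => y ^ t) (t * x ^ (t - 1)) x := by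
      intro x hx
      have hx0 : x ≠ 0 := (lt_of_lt_of_le ha' hx.1).ne'
      simpa [mul_comm] using Real.hasDerivAt_rpow_const (p := t) (Or.inl hx0)
    obtain ⟨c, hc1, hc2⟩ := exists_hasDerivAt_eq_slope (fun y : ℝ => y ^ t)
      (fun x => t * x ^ (t - 1)) hab'
      (fun x hx => (hc x hx).continuousAt.continuousWithinAt)
      (fun x hx => hc x (Set.mem_Icc.2 ⟨hx.1.le, hx.2.le⟩))
    have hcb : b ^ (t - 1) ≤ c ^ (t - 1) :=
      Real.rpow_le_rpow_of_nonpos (lt_trans ha' hc1.1) hc1.2.le (by linarith)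
    have h1 : t * b ^ (t - 1) ≤ t * c ^ (t - 1) :=
      mul_le_mul_of_nonneg_left hcb ht0.le
    have h2 : t * c ^ (t - 1) * (b - a) = b ^ t - a ^ t := by
      rw [hc2, div_mul_cancel₀ _ (sub_ne_zero.2 hab'.ne')]
    nlinarith [mul_le_mul_of_nonneg_right h1 (by linarith : (0:ℝ) ≤ b - a)]

lemma aux_mvt_high {p a b : ℝ} (hp : 1 < p) (ha : 0 < a) (hab : a ≤ b) :
    (p - 1) * b ^ (-p) * (b - a) ≤ a ^ (1 - p) - b ^ (1 - p) := by
  rcases eq_or_lt_of_le hab with rfl | hab'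
  · simp
  have hb : 0 < b := lt_of_lt_of_le ha hab
  have hc : ∀ x ∈ Set.Icc a b, HasDerivAt (fun y : ℝ => y ^ (1 - p)) ((1 - p) * x ^ (-p)) x := by
    intro x hx
    have hx0 : x ≠ 0 := (lt_of_lt_of_le ha hx.1).ne'
    have := Real.hasDerivAt_rpow_const (p := 1 - p) (Or.inl hx0)
    simpa [sub_sub, mul_comm] using this
  obtain ⟨c, hc1, hc2⟩ := exists_hasDerivAt_eq_slope (fun y : ℝ => y ^ (1 - p))
    (fun x => (1 - p) * x ^ (-p)) hab'
    (fun x hx => (hc x hx).continuousAt.continuousWithinAt)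
    (fun x hx => hc x (Set.mem_Icc.2 ⟨hx.1.le, hx.2.le⟩))
  have hcb : b ^ (-p) ≤ c ^ (-p) :=
    Real.rpow_le_rpow_of_nonpos (lt_trans ha hc1.1) hc1.2.le (by linarith)
  have h2 : (1 - p) * c ^ (-p) * (b - a) = b ^ (1 - p) - a ^ (1 - p) := by
    rw [hc2, div_mul_cancel₀ _ (sub_ne_zero.2 hab'.ne')]
  nlinarith [mul_le_mul_of_nonneg_right (mul_le_mul_of_nonneg_left hcb
    (by linarith : (0:ℝ) ≤ p - 1)) (by linarith : (0:ℝ) ≤ b - a)]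

lemma head_sum {s : ℝ} (hs0 : 0 < s) (hs1 : s < 1) (n : ℕ) :
    ∑ i ∈ Finset.range n, ((i : ℝ) + 1) ^ (-s) ≤ (n : ℝ) ^ (1 - s) / (1 - s) := by
  rw [le_div_iff₀ (by linarith : (0:ℝ) < 1 - s)]
  have key : ∀ i : ℕ, ((i : ℝ) + 1) ^ (-s) * (1 - s) ≤
      (((i + 1 : ℕ) : ℝ)) ^ (1 - s) - ((i : ℝ)) ^ (1 - s) := by
    intro i
    have := aux_mvt_low (t := 1 - s) (a := (i : ℝ)) (b := (i : ℝ) + 1)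
      (by linarith) (by linarith) (Nat.cast_nonneg i) (by linarith)
    push_cast
    have e : (1 - s) - 1 = -s := by ring
    rw [e] at this
    nlinarith [this]
  calc (∑ i ∈ Finset.range n, ((i : ℝ) + 1) ^ (-s)) * (1 - s)
      = ∑ i ∈ Finset.range n, ((i : ℝ) + 1) ^ (-s) * (1 - s) := by
        rw [Finset.sum_mul]
    _ ≤ ∑ i ∈ Finset.range n, ((((i + 1 : ℕ) : ℝ)) ^ (1 - s) - ((i : ℝ)) ^ (1 - s)) :=
        Finset.sum_le_sum fun i _ => key i
    _ ≤ (n : ℝ) ^ (1 - s) := by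
        have tele := Finset.sum_range_sub (f := fun i : ℕ => ((i : ℝ)) ^ (1 - s)) n
        rw [tele]
        simp [Real.zero_rpow (by linarith : (1 : ℝ) - s ≠ 0)]

lemma tail_summable {p : ℝ} (hp : 1 < p) (N : ℕ) :
    Summable (fun i : ℕ => ((i : ℝ) + (N : ℝ) + 1) ^ (-p)) := by
  have h1 : Summable (fun n : ℕ => ((n : ℝ)) ^ (-p)) :=
    Real.summable_nat_rpow.2 (by linarith)
  have h2 := (summable_nat_add_iff (f := fun n : ℕ => ((n : ℝ)) ^ (-p)) (N + 1)).2 h1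
  refine h2.congr fun i => ?_
  push_cast; ring_nf

lemma tail_sum {p : ℝ} (hp : 1 < p) {N : ℕ} (hN : 1 ≤ N) :
    ∑' i : ℕ, ((i : ℝ) + (N : ℝ) + 1) ^ (-p) ≤ (N : ℝ) ^ (1 - p) / (p - 1) := by
  apply tsum_le_of_sum_range_le (fun i => Real.rpow_nonneg (by positivity) _)
  intro n
  rw [le_div_iff₀ (by linarith : (0:ℝ) < p - 1)]
  have key : ∀ i : ℕ, ((i : ℝ) + (N : ℝ) + 1) ^ (-p) * (p - 1) ≤
      ((i : ℝ) + (N : ℝ)) ^ (1 - p) - ((i : ℝ) + (N : ℝ) + 1) ^ (1 - p) := by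
    intro i
    have hN' : (1 : ℝ) ≤ (N : ℝ) := by exact_mod_cast hN
    have := aux_mvt_high (p := p) (a := (i : ℝ) + (N : ℝ)) (b := (i : ℝ) + (N : ℝ) + 1)
      hp (by positivity) (by linarith)
    nlinarith [this]
  calc (∑ i ∈ Finset.range n, ((i : ℝ) + (N : ℝ) + 1) ^ (-p)) * (p - 1)
      = ∑ i ∈ Finset.range n, ((i : ℝ) + (N : ℝ) + 1) ^ (-p) * (p - 1) := by
        rw [Finset.sum_mul]
    _ ≤ ∑ i ∈ Finset.range n,
          (((i : ℝ) + (N : ℝ)) ^ (1 - p) - (((i + 1 : ℕ) : ℝ) + (N : ℝ)) ^ (1 - p)) := by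
        refine Finset.sum_le_sum fun i _ => ?_
        have := key i
        push_cast
        rw [show ((i:ℝ) + 1 + (N:ℝ)) = (i:ℝ) + (N:ℝ) + 1 by ring]
        exact this
    _ ≤ (N : ℝ) ^ (1 - p) := by
        have tele := Finset.sum_range_sub' (f := fun i : ℕ => ((i : ℝ) + (N : ℝ)) ^ (1 - p)) n
        rw [tele]
        have : (0 : ℝ) ≤ ((n : ℝ) + (N : ℝ)) ^ (1 - p) := Real.rpow_nonneg (by positivity) _
        simp only [Nat.cast_zero, zero_add]
        linarith

lemma sector_lb_s8 {δ : ℝ} (hδ : 0 < δ) (hδπ : δ < Real.pi) :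
    ∃ ε : ℝ, 0 < ε ∧ ε ≤ 1 ∧ ∀ z : ℂ, |z.arg| < Real.pi - δ → ∀ t : ℝ, 0 ≤ t →
      ε * (‖z‖ + t) ≤ ‖z + (t : ℂ)‖ := by
  set m : ℝ := max (Real.cos δ) 0 with hm
  have hm0 : 0 ≤ m := le_max_right _ _
  have hcδ : Real.cos δ < 1 := by
    have := Real.cos_lt_cos_of_nonneg_of_le_pi (le_refl (0:ℝ)) hδπ.le hδ
    simpa using this
  have hm1 : m < 1 := max_lt hcδ one_pos
  have hε1 : Real.sqrt ((1 - m) / 2) ≤ 1 := by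
    calc Real.sqrt ((1 - m) / 2) ≤ Real.sqrt 1 := Real.sqrt_le_sqrt (by linarith)
      _ = 1 := Real.sqrt_one
  refine ⟨Real.sqrt ((1 - m) / 2), Real.sqrt_pos.2 (by linarith), hε1, ?_⟩
  intro z hz t ht
  rcases eq_or_ne z 0 with rfl | hz0
  · have h0 : ‖(0:ℂ) + (t:ℂ)‖ = t := by
      simp [Complex.norm_real, _root_.abs_of_nonneg ht]
    rw [h0, norm_zero, zero_add]
    calc Real.sqrt ((1 - m) / 2) * t ≤ 1 * t := mul_le_mul_of_nonneg_right hε1 ht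
      _ = t := one_mul t
  have habs0 : 0 < ‖z‖ := norm_pos_iff.mpr hz0
  have hre : -m * ‖z‖ ≤ z.re := by
    have hcos : Real.cos (Real.pi - δ) ≤ Real.cos |z.arg| :=
      Real.cos_le_cos_of_nonneg_of_le_pi (abs_nonneg _) (by linarith) hz.le
    rw [Real.cos_pi_sub, Real.cos_abs] at hcos
    have hzre : z.re = ‖z‖ * Real.cos z.arg := by
      rw [Complex.cos_arg hz0, mul_comm, div_mul_cancel₀ _ habs0.ne']
    rw [hzre]
    have h1 : -m ≤ Real.cos z.arg := by
      have h2 : Real.cos δ ≤ m := le_max_left _ _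
      linarith
    nlinarith
  have hsq : (Real.sqrt ((1 - m) / 2) * (‖z‖ + t)) ^ 2 ≤
      (‖z + (t : ℂ)‖) ^ 2 := by
    rw [mul_pow, Real.sq_sqrt (by linarith : (0:ℝ) ≤ (1 - m) / 2)]
    rw [Complex.sq_norm, Complex.normSq_apply]
    simp only [Complex.add_re, Complex.add_im, Complex.ofReal_re, Complex.ofReal_im, add_zero]
    have habs2 : (‖z‖) ^ 2 = z.re ^ 2 + z.im ^ 2 := by
      rw [Complex.sq_norm, Complex.normSq_apply]; ring
    nlinarith [habs2, hre, sq_nonneg (‖z‖ - t), sq_nonneg (z.re + t),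
      sq_nonneg (‖z‖ + t), mul_le_mul_of_nonneg_right hre ht]
  have h1 : 0 ≤ Real.sqrt ((1 - m) / 2) * (‖z‖ + t) := by positivity
  nlinarith [hsq, norm_nonneg (z + (t : ℂ))]

lemma summable_T {α β : ℝ} (hα0 : 0 < α) (hβ : 0 < β) (hαβ : 1 < α + β) {x : ℝ}
    (hx0 : 0 < x) :
    Summable (fun k : ℕ => (((k:ℝ)+1) ^ α * (x + ((k:ℝ)+1) ^ β) ^ 2)⁻¹) := by
  have hp : 1 < α + 2 * β := by linarith
  have hS : Summable (fun k : ℕ => ((k:ℝ)+1) ^ (-(α + 2 * β))) := by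
    refine (tail_summable hp 0).congr fun i => ?_
    norm_num
  refine Summable.of_nonneg_of_le (fun k => by positivity) (fun k => ?_) hS
  have hk1 : (0:ℝ) < (k:ℝ) + 1 := by positivity
  have hb : (0:ℝ) < ((k:ℝ)+1) ^ β := by positivity
  have e1 : ((k:ℝ)+1) ^ α * (((k:ℝ)+1) ^ β) ^ 2 = ((k:ℝ)+1) ^ (α + 2 * β) := by
    rw [← Real.rpow_natCast (((k:ℝ)+1) ^ β) 2, ← Real.rpow_mul hk1.le,
      ← Real.rpow_add hk1]
    norm_num; ring_nf
  have ha : (0:ℝ) < ((k:ℝ)+1) ^ α := by positivity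
  rw [Real.rpow_neg hk1.le, ← e1]
  apply inv_anti₀ (by positivity)
  have h2 : (((k:ℝ)+1) ^ β) ^ 2 ≤ (x + ((k:ℝ)+1) ^ β) ^ 2 := by nlinarith
  exact mul_le_mul_of_nonneg_left h2 ha.le

lemma S_bound {α β r : ℝ} (hα0 : 0 < α) (hα1 : α < 1) (hβ : 0 < β) (hαβ : 1 < α + β)
    (hr : r = (α + β - 1) / β) :
    ∃ C₀ : ℝ, 0 < C₀ ∧ ∀ x : ℝ, 2 ≤ x →
      ∑' k : ℕ, (((k:ℝ)+1) ^ α * (x + ((k:ℝ)+1) ^ β) ^ 2)⁻¹ ≤ C₀ * x ^ (-1 - r) := by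
  have hα1' : (0:ℝ) < 1 - α := by linarith
  have hαβ' : (0:ℝ) < α + β - 1 := by linarith
  refine ⟨2 ^ (1 - α) / (1 - α) + 1 / (α + β - 1),
    add_pos (div_pos (Real.rpow_pos_of_pos two_pos _) hα1') (by positivity), ?_⟩
  intro x hx
  have hx0 : (0:ℝ) < x := by linarith
  have hT := summable_T hα0 hβ hαβ (x := x) hx0
  set N : ℕ := ⌈x ^ β⁻¹⌉₊ with hN
  have hx1 : (1:ℝ) ≤ x ^ β⁻¹ := by
    rw [show (1:ℝ) = (1:ℝ) ^ β⁻¹ from (Real.one_rpow _).symm]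
    exact Real.rpow_le_rpow zero_le_one (by linarith) (by positivity)
  have hxb : (0:ℝ) < x ^ β⁻¹ := by linarith
  have hNge : x ^ β⁻¹ ≤ (N : ℝ) := Nat.le_ceil _
  have hN1 : 1 ≤ N := by
    have : (1:ℝ) ≤ (N:ℝ) := le_trans hx1 hNge
    exact_mod_cast this
  have hNle : (N : ℝ) ≤ 2 * x ^ β⁻¹ := by
    have := Nat.ceil_lt_add_one (le_of_lt hxb)
    push_cast at this ⊢
    linarith
  -- exponent arithmetic
  have hexp1 : β⁻¹ * (1 - α) + (-2 : ℝ) = -1 - r := by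
    rw [hr]; field_simp; ring
  have hexp2 : (-1 : ℝ) + β⁻¹ * (1 - (α + β)) = -1 - r := by
    rw [hr]; field_simp; ring
  have hxpow : ∀ u v : ℝ, x ^ u * x ^ v = x ^ (u + v) := fun u v =>
    (Real.rpow_add hx0 u v).symm
  -- split the sum
  rw [← Summable.sum_add_tsum_nat_add N hT]
  -- head bound
  have head : ∑ i ∈ Finset.range N, (((i:ℝ)+1) ^ α * (x + ((i:ℝ)+1) ^ β) ^ 2)⁻¹ ≤
      (2 ^ (1 - α) / (1 - α)) * x ^ (-1 - r) := by
    have step1 : ∀ i : ℕ, (((i:ℝ)+1) ^ α * (x + ((i:ℝ)+1) ^ β) ^ 2)⁻¹ ≤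
        ((i:ℝ)+1) ^ (-α) * (x ^ 2)⁻¹ := by
      intro i
      have hk1 : (0:ℝ) < (i:ℝ) + 1 := by positivity
      have ha : (0:ℝ) < ((i:ℝ)+1) ^ α := by positivity
      have hb : (0:ℝ) < ((i:ℝ)+1) ^ β := by positivity
      rw [Real.rpow_neg hk1.le, ← mul_inv]
      apply inv_anti₀ (by positivity)
      have h2 : x ^ 2 ≤ (x + ((i:ℝ)+1) ^ β) ^ 2 := by nlinarith
      exact mul_le_mul_of_nonneg_left h2 ha.le
    have hsq : (x ^ 2)⁻¹ = x ^ (-2 : ℝ) := by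
      rw [← Real.rpow_natCast x 2, ← Real.rpow_neg hx0.le]
      norm_num
    calc ∑ i ∈ Finset.range N, (((i:ℝ)+1) ^ α * (x + ((i:ℝ)+1) ^ β) ^ 2)⁻¹
        ≤ ∑ i ∈ Finset.range N, ((i:ℝ)+1) ^ (-α) * (x ^ 2)⁻¹ :=
          Finset.sum_le_sum fun i _ => step1 i
      _ = (∑ i ∈ Finset.range N, ((i:ℝ)+1) ^ (-α)) * (x ^ 2)⁻¹ := by
          rw [Finset.sum_mul]
      _ ≤ ((N : ℝ) ^ (1 - α) / (1 - α)) * (x ^ 2)⁻¹ :=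
          mul_le_mul_of_nonneg_right (head_sum hα0 hα1 N) (by positivity)
      _ ≤ ((2 * x ^ β⁻¹) ^ (1 - α) / (1 - α)) * (x ^ 2)⁻¹ := by
          have := Real.rpow_le_rpow (Nat.cast_nonneg N) hNle (by linarith : (0:ℝ) ≤ 1 - α)
          gcongr
      _ = (2 ^ (1 - α) / (1 - α)) * x ^ (-1 - r) := by
          rw [Real.mul_rpow (by norm_num) hxb.le, ← Real.rpow_mul hx0.le, hsq]
          rw [div_mul_eq_mul_div, div_mul_eq_mul_div, mul_assoc, hxpow, hexp1]
          
  -- tail bound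
  have tail : ∑' i : ℕ, ((((i + N : ℕ):ℝ)+1) ^ α * (x + (((i + N : ℕ):ℝ)+1) ^ β) ^ 2)⁻¹ ≤
      (1 / (α + β - 1)) * x ^ (-1 - r) := by
    have step2 : ∀ i : ℕ, ((((i + N : ℕ):ℝ)+1) ^ α * (x + (((i + N : ℕ):ℝ)+1) ^ β) ^ 2)⁻¹ ≤
        x⁻¹ * ((i:ℝ) + (N:ℝ) + 1) ^ (-(α + β)) := by
      intro i
      have hc : ((i + N : ℕ):ℝ) = (i:ℝ) + (N:ℝ) := by push_cast; ring
      rw [hc]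
      have hk1 : (0:ℝ) < (i:ℝ) + (N:ℝ) + 1 := by positivity
      have ha : (0:ℝ) < ((i:ℝ)+(N:ℝ)+1) ^ α := Real.rpow_pos_of_pos hk1 α
      have hb : (0:ℝ) < ((i:ℝ)+(N:ℝ)+1) ^ β := Real.rpow_pos_of_pos hk1 β
      have e1 : ((i:ℝ)+(N:ℝ)+1) ^ α * ((i:ℝ)+(N:ℝ)+1) ^ β = ((i:ℝ)+(N:ℝ)+1) ^ (α + β) :=
        (Real.rpow_add hk1 α β).symm
      rw [Real.rpow_neg hk1.le, ← mul_inv, ← e1]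
      apply inv_anti₀ (by positivity)
      nlinarith [mul_le_mul_of_nonneg_left
        (show x * ((i:ℝ)+(N:ℝ)+1) ^ β ≤ (x + ((i:ℝ)+(N:ℝ)+1) ^ β) ^ 2 by nlinarith) ha.le]
    have hsum2 : Summable (fun i : ℕ => x⁻¹ * ((i:ℝ) + (N:ℝ) + 1) ^ (-(α + β))) :=
      (tail_summable hαβ N).mul_left _
    calc ∑' i : ℕ, ((((i + N : ℕ):ℝ)+1) ^ α * (x + (((i + N : ℕ):ℝ)+1) ^ β) ^ 2)⁻¹
        ≤ ∑' i : ℕ, x⁻¹ * ((i:ℝ) + (N:ℝ) + 1) ^ (-(α + β)) := by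
          refine Summable.tsum_le_tsum step2 ((summable_nat_add_iff
            (f := fun k : ℕ => (((k:ℝ)+1) ^ α * (x + ((k:ℝ)+1) ^ β) ^ 2)⁻¹) N).2 hT) hsum2
      _ = x⁻¹ * ∑' i : ℕ, ((i:ℝ) + (N:ℝ) + 1) ^ (-(α + β)) := tsum_mul_left
      _ ≤ x⁻¹ * ((N:ℝ) ^ (1 - (α + β)) / (α + β - 1)) :=
          mul_le_mul_of_nonneg_left (tail_sum hαβ hN1) (by positivity)
      _ ≤ x⁻¹ * ((x ^ β⁻¹) ^ (1 - (α + β)) / (α + β - 1)) := by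
          have h5 : (N:ℝ) ^ (1 - (α + β)) ≤ (x ^ β⁻¹) ^ (1 - (α + β)) :=
            Real.rpow_le_rpow_of_nonpos hxb hNge (by linarith)
          exact mul_le_mul_of_nonneg_left (by gcongr) (by positivity)
      _ = (1 / (α + β - 1)) * x ^ (-1 - r) := by
          rw [← Real.rpow_mul hx0.le, ← Real.rpow_neg_one x, div_eq_mul_one_div,
            ← mul_assoc, hxpow, hexp2]
          ring
  linarith [head, tail]

theorem stmt8 (α β δ : ℝ) (hα0 : 0 < α) (hα1 : α ≤ 1) (hβ : 0 < β) (hαβ : 1 < α + β)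
    (r : ℝ) (hr : r = (α + β - 1) / β) (hr0 : 0 < r) (hr1 : r < 1) (hδ : 0 < δ)
    (K : ℂ → ℂ)
    (hK : ∀ z : ℂ, K z = ∑' k : ℕ,
      1 / (((((k : ℝ) + 1) ^ α : ℝ) : ℂ) * (z + ((((k : ℝ) + 1) ^ β : ℝ) : ℂ)))) :
    ∃ C : ℝ, ∀ z : ℂ, |z.arg| < Real.pi - δ → 2 ≤ ‖z‖ →
      ‖z * deriv K z‖ ≤ C / ‖z‖ ^ r := by
  by_cases hπ : Real.pi ≤ δ
  · exact ⟨0, fun z hz _ => absurd hz (not_lt.2 (by linarith [abs_nonneg z.arg]))⟩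
  push_neg at hπ
  have hα1' : α < 1 := by
    have := (div_lt_one hβ).1 (hr ▸ hr1)
    linarith
  obtain ⟨ε, hε0, hε1, hsec⟩ := sector_lb_s8 hδ hπ
  obtain ⟨C₀, hC₀, hS⟩ := S_bound hα0 hα1' hβ hαβ hr
  refine ⟨C₀ / ε ^ 2, ?_⟩
  intro z hargz hz2
  set a : ℕ → ℝ := fun k => ((k:ℝ)+1) ^ α with ha_def
  set b : ℕ → ℝ := fun k => ((k:ℝ)+1) ^ β with hb_def
  have hapos : ∀ k, 0 < a k := fun k => Real.rpow_pos_of_pos (by positivity) _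
  have hbpos : ∀ k, 0 < b k := fun k => Real.rpow_pos_of_pos (by positivity) _
  set g : ℕ → ℂ → ℂ := fun k w => 1 / ((a k : ℂ) * (w + (b k : ℂ))) with hg_def
  set g' : ℕ → ℂ → ℂ := fun k w => -(a k : ℂ) / ((a k : ℂ) * (w + (b k : ℂ))) ^ 2
    with hg'_def
  have hKfun : K = fun w : ℂ => ∑' k : ℕ, g k w := funext fun w => hK w
  have hzabs : (0:ℝ) < ‖z‖ := by linarith
  -- lower bound for |w + b k| on the ball
  have key : ∀ k : ℕ, ∀ w ∈ Metric.ball z ε,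
      ε * (1 + b k) ≤ ‖w + (b k : ℂ)‖ := by
    intro k w hw
    have h1 : ε * (‖z‖ + b k) ≤ ‖z + (b k : ℂ)‖ :=
      hsec z hargz (b k) (hbpos k).le
    have h2 : ‖z + (b k : ℂ)‖ ≤
        ‖w + (b k : ℂ)‖ + ‖z - w‖ := by
      calc ‖z + (b k : ℂ)‖ = ‖(w + (b k : ℂ)) + (z - w)‖ := by
            ring_nf
        _ ≤ _ := norm_add_le _ _
    have h3 : ‖z - w‖ < ε := by
      rw [← Complex.dist_eq, dist_comm]
      exact Metric.mem_ball.1 hw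
    nlinarith [mul_le_mul_of_nonneg_left hz2 hε0.le]
  have hball_ne : ∀ k : ℕ, ∀ w ∈ Metric.ball z ε, (a k : ℂ) * (w + (b k : ℂ)) ≠ 0 := by
    intro k w hw
    apply mul_ne_zero
    · exact_mod_cast (hapos k).ne'
    · intro h0
      have := key k w hw
      rw [h0, norm_zero] at this
      nlinarith [hbpos k, hε0]
  -- derivative of each term
  have hterm : ∀ k : ℕ, ∀ w ∈ Metric.ball z ε, HasDerivAt (g k) (g' k w) w := by
    intro k w hw
    have h0 : HasDerivAt (fun w : ℂ => (a k : ℂ) * (w + (b k : ℂ))) (a k : ℂ) w := by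
      simpa using ((hasDerivAt_id w).add_const ((b k : ℝ) : ℂ)).const_mul (a k : ℂ)
    have := h0.inv (hball_ne k w hw)
    simpa [hg_def, hg'_def, one_div, div_eq_mul_inv, Pi.inv_def] using this
  -- norm of g' k w
  have hnorm : ∀ k : ℕ, ∀ w : ℂ,
      ‖g' k w‖ = a k / (a k * ‖w + (b k : ℂ)‖) ^ 2 := by
    intro k w
    rw [hg'_def]
    simp only [norm_div, norm_neg, norm_pow, norm_mul, Complex.norm_real,
      Real.norm_eq_abs, abs_of_pos (hapos k)]
  -- uniform bound on the ball
  set u : ℕ → ℝ := fun k => (a k * (ε * (1 + b k)) ^ 2)⁻¹ with hu_def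
  have hbnd : ∀ k : ℕ, ∀ w ∈ Metric.ball z ε, ‖g' k w‖ ≤ u k := by
    intro k w hw
    have hkey := key k w hw
    have ht : (0:ℝ) < ‖w + (b k : ℂ)‖ :=
      lt_of_lt_of_le (by positivity) hkey
    rw [hnorm k w, hu_def]
    have h4 : a k / (a k * ‖w + (b k : ℂ)‖) ^ 2
        = (a k * ‖w + (b k : ℂ)‖ ^ 2)⁻¹ := by
      field_simp [(hapos k).ne', ht.ne']
    rw [h4]
    apply inv_anti₀ (by positivity)
    have := hkey
    have h5 : (ε * (1 + b k)) ^ 2 ≤ ‖w + (b k : ℂ)‖ ^ 2 :=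
      pow_le_pow_left₀ (by positivity) this 2
    exact mul_le_mul_of_nonneg_left h5 (hapos k).le
  -- summability of u
  have hu_sum : Summable u := by
    have hp : 1 < α + 2 * β := by linarith
    have hS2 : Summable (fun k : ℕ => (ε ^ 2)⁻¹ * ((k:ℝ)+1) ^ (-(α + 2 * β))) := by
      refine Summable.mul_left _ ((tail_summable hp 0).congr fun i => by norm_num)
    refine Summable.of_nonneg_of_le (fun k => by positivity) (fun k => ?_) hS2
    rw [hu_def]
    have hk1 : (0:ℝ) < (k:ℝ) + 1 := by positivity
    have e1 : a k * (b k) ^ 2 = ((k:ℝ)+1) ^ (α + 2 * β) := by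
      rw [ha_def, hb_def]
      rw [← Real.rpow_natCast (((k:ℝ)+1) ^ β) 2, ← Real.rpow_mul hk1.le,
        ← Real.rpow_add hk1]
      norm_num; ring_nf
    rw [Real.rpow_neg hk1.le, ← e1, ← mul_inv]
    have h6 : ε ^ 2 * (a k * b k ^ 2) ≤ ε ^ 2 * (a k * (1 + b k) ^ 2) := by
      apply mul_le_mul_of_nonneg_left _ (sq_nonneg ε)
      apply mul_le_mul_of_nonneg_left _ (hapos k).le
      nlinarith [hbpos k]
    calc (fun k => (a k * (ε * (1 + b k)) ^ 2)⁻¹) k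
        = (ε ^ 2 * (a k * (1 + b k) ^ 2))⁻¹ := by simp only []; ring_nf
      _ ≤ (ε ^ 2 * (a k * b k ^ 2))⁻¹ := inv_anti₀ (by positivity) h6
  -- summability of g at z
  have hg0_sum : Summable (fun k => g k z) := by
    have hp : 1 < α + β := hαβ
    have hS3 : Summable (fun k : ℕ => ε⁻¹ * ((k:ℝ)+1) ^ (-(α + β))) :=
      Summable.mul_left _ ((tail_summable hp 0).congr fun i => by norm_num)
    refine Summable.of_norm_bounded hS3 fun k => ?_
    have hzb : ε * (1 + b k) ≤ ‖z + (b k : ℂ)‖ :=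
      key k z (Metric.mem_ball_self hε0)
    have hk1 : (0:ℝ) < (k:ℝ) + 1 := by positivity
    have e2 : a k * b k = ((k:ℝ)+1) ^ (α + β) := by
      rw [ha_def, hb_def, ← Real.rpow_add hk1]
    have hng : ‖g k z‖ = (a k * ‖z + (b k : ℂ)‖)⁻¹ := by
      rw [hg_def]
      simp only [one_div, norm_inv, norm_mul, Complex.norm_real,
        Real.norm_eq_abs, abs_of_pos (hapos k)]
    rw [hng, Real.rpow_neg hk1.le, ← e2, ← mul_inv]
    apply inv_anti₀ (by positivity)
    calc ε * (a k * b k) = a k * (ε * b k) := by ring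
      _ ≤ a k * ‖z + (b k : ℂ)‖ := by
          refine mul_le_mul_of_nonneg_left (le_trans ?_ hzb) (hapos k).le
          nlinarith [hbpos k, hε0]
  -- differentiate the series
  have hD : HasDerivAt K (∑' k, g' k z) z := by
    rw [hKfun]
    exact hasDerivAt_tsum_of_isPreconnected hu_sum Metric.isOpen_ball
      (convex_ball z ε).isPreconnected hterm hbnd (Metric.mem_ball_self hε0) hg0_sum
      (Metric.mem_ball_self hε0)
  have hDeriv : deriv K z = ∑' k, g' k z := hD.deriv
  have hsum_norm : Summable (fun k => ‖g' k z‖) :=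
    Summable.of_nonneg_of_le (fun k => norm_nonneg _)
      (fun k => hbnd k z (Metric.mem_ball_self hε0)) hu_sum
  -- pointwise bound at z
  have hterm_bound : ∀ k : ℕ,
      ‖g' k z‖ ≤ (ε ^ 2)⁻¹ * (a k * (‖z‖ + b k) ^ 2)⁻¹ := by
    intro k
    have hzb : ε * (‖z‖ + b k) ≤ ‖z + (b k : ℂ)‖ :=
      hsec z hargz (b k) (hbpos k).le
    have ht : (0:ℝ) < ‖z + (b k : ℂ)‖ :=
      lt_of_lt_of_le (by positivity) hzb
    rw [hnorm k z]
    have h4 : a k / (a k * ‖z + (b k : ℂ)‖) ^ 2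
        = (a k * ‖z + (b k : ℂ)‖ ^ 2)⁻¹ := by
      field_simp [(hapos k).ne', ht.ne']
    rw [h4, show (ε ^ 2)⁻¹ * (a k * (‖z‖ + b k) ^ 2)⁻¹
      = (a k * (ε * (‖z‖ + b k)) ^ 2)⁻¹ by rw [← mul_inv]; ring_nf]
    apply inv_anti₀ (by positivity)
    exact mul_le_mul_of_nonneg_left (pow_le_pow_left₀ (by positivity) hzb 2) (hapos k).le
  have hsumR : Summable (fun k : ℕ => (a k * (‖z‖ + b k) ^ 2)⁻¹) :=
    summable_T hα0 hβ hαβ hzabs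
  have habs_mul : ‖z * deriv K z‖ = ‖z‖ * ‖∑' k, g' k z‖ := by
    rw [hDeriv, norm_mul]
  rw [habs_mul]
  calc ‖z‖ * ‖∑' k, g' k z‖
      ≤ ‖z‖ * ∑' k, ‖g' k z‖ :=
        mul_le_mul_of_nonneg_left (norm_tsum_le_tsum_norm hsum_norm) hzabs.le
    _ ≤ ‖z‖ * ((ε ^ 2)⁻¹ * (C₀ * ‖z‖ ^ (-1 - r))) := by
        refine mul_le_mul_of_nonneg_left ?_ hzabs.le
        calc ∑' k, ‖g' k z‖
            ≤ ∑' k : ℕ, (ε ^ 2)⁻¹ * (a k * (‖z‖ + b k) ^ 2)⁻¹ :=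
              Summable.tsum_le_tsum hterm_bound hsum_norm (hsumR.mul_left _)
          _ = (ε ^ 2)⁻¹ * ∑' k : ℕ, (a k * (‖z‖ + b k) ^ 2)⁻¹ := tsum_mul_left
          _ ≤ (ε ^ 2)⁻¹ * (C₀ * ‖z‖ ^ (-1 - r)) :=
              mul_le_mul_of_nonneg_left (hS _ hz2) (by positivity)
    _ = C₀ / ε ^ 2 / ‖z‖ ^ r := by
        have e4 : ‖z‖ * ‖z‖ ^ (-1 - r) = (‖z‖ ^ r)⁻¹ := by
          nth_rewrite 1 [← Real.rpow_one (‖z‖)]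
          rw [← Real.rpow_add hzabs, show (1:ℝ) + (-1 - r) = -r by ring,
            Real.rpow_neg hzabs.le]
        rw [show ‖z‖ * ((ε ^ 2)⁻¹ * (C₀ * ‖z‖ ^ (-1 - r)))
          = (C₀ / ε ^ 2) * (‖z‖ * ‖z‖ ^ (-1 - r)) by ring, e4]
        exact (div_eq_mul_inv _ _).symm
end

section
/- Let α = 1 and β > 0 (so r = 1), and fix δ > 0. Define K(z) = Σ_{k=1}^∞ 1/(k (z + k^β)). Then there exists C such that for all z with |arg z| < π − δ and |z| ≥ 2, |z K'(z)| ≤ C log|z| / |z|. -/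
open Complex Real MeasureTheory Set Filter

lemma tel_step (p y : ℝ) (hp : 0 < p) (hy : 1 ≤ y) :
    p * ((y + 1) ^ p * (y + 1))⁻¹ ≤ (y ^ p)⁻¹ - ((y + 1) ^ p)⁻¹ := by
  have hy0 : (0:ℝ) < y := by linarith
  have hy1 : (0:ℝ) < y + 1 := by linarith
  set A := y ^ p with hA_def
  set B := (y + 1) ^ p with hB_def
  have hA : 0 < A := Real.rpow_pos_of_pos hy0 p
  have hB : 0 < B := Real.rpow_pos_of_pos hy1 p
  -- log bound : 1/(y+1) ≤ log ((y+1)/y)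
  have hlog : 1 / (y + 1) ≤ Real.log ((y + 1) / y) := by
    rw [Real.le_log_iff_exp_le (by positivity)]
    have h2 : y / (y + 1) ≤ Real.exp (-(1 / (y + 1))) := by
      have := Real.add_one_le_exp (-(1 / (y + 1)))
      have e : -(1 / (y + 1)) + 1 = y / (y + 1) := by field_simp; ring
      linarith [e ▸ this]
    have h3 : Real.exp (1 / (y + 1)) = (Real.exp (-(1 / (y + 1))))⁻¹ := by
      rw [← Real.exp_neg]; ring_nf
    rw [h3]
    rw [show (y + 1) / y = (y / (y + 1))⁻¹ by rw [inv_div]]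
    exact inv_anti₀ (by positivity) h2
  -- main ratio inequality
  have hratio : 1 + p / (y + 1) ≤ B / A := by
    have e1 : B / A = ((y + 1) / y) ^ p := by
      rw [hA_def, hB_def, ← Real.div_rpow hy1.le hy0.le]
    have e2 : ((y + 1) / y) ^ p = Real.exp (Real.log ((y + 1) / y) * p) :=
      Real.rpow_def_of_pos (by positivity) p
    have e3 : 1 + Real.log ((y + 1) / y) * p ≤ Real.exp (Real.log ((y + 1) / y) * p) := by
      linarith [Real.add_one_le_exp (Real.log ((y + 1) / y) * p)]
    have e4 : p / (y + 1) ≤ Real.log ((y + 1) / y) * p := by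
      rw [div_eq_mul_inv, mul_comm _ p]
      have := mul_le_mul_of_nonneg_left hlog hp.le
      calc p * (y+1)⁻¹ = p * (1/(y+1)) := by rw [one_div]
        _ ≤ p * Real.log ((y+1)/y) := this
    rw [e1, e2]; linarith
  have hBA : A * (y + 1 + p) ≤ B * (y + 1) := by
    rw [le_div_iff₀ hA] at hratio
    have := mul_le_mul_of_nonneg_right hratio hy1.le
    calc A * (y + 1 + p) = (1 + p / (y + 1)) * A * (y + 1) := by field_simp
      _ ≤ B * (y + 1) := this
  have e5 : A⁻¹ - B⁻¹ = (B - A) / (A * B) := by field_simp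
  rw [e5, ← div_eq_mul_inv, div_le_div_iff₀ (by positivity) (by positivity)]
  nlinarith [mul_le_mul_of_nonneg_left hBA hB.le]

lemma sum_min_bound (β x : ℝ) (hβ : 0 < β) (hx : 2 ≤ x) (n : ℕ) :
    ∑ k ∈ Finset.range n,
      min ((((k : ℝ) + 1) * x ^ 2)⁻¹) ((((k : ℝ) + 1) * (((k : ℝ) + 1) ^ β) ^ 2)⁻¹)
      ≤ (3 + 2 / β) * Real.log x / x ^ 2 := by
  have hx0 : (0 : ℝ) < x := by linarith
  set g : ℕ → ℝ := fun k =>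
    min ((((k : ℝ) + 1) * x ^ 2)⁻¹) ((((k : ℝ) + 1) * (((k : ℝ) + 1) ^ β) ^ 2)⁻¹) with hg_def
  have hg0 : ∀ k, 0 ≤ g k := by
    intro k
    have h1 : (0:ℝ) ≤ (((k : ℝ) + 1) * x ^ 2)⁻¹ := by positivity
    have h2 : (0:ℝ) ≤ (((k : ℝ) + 1) * (((k : ℝ) + 1) ^ β) ^ 2)⁻¹ := by positivity
    exact le_min h1 h2
  set N : ℕ := ⌈x ^ (1/β)⌉₊ with hN_def
  have hrp : (0:ℝ) < x ^ (1/β) := Real.rpow_pos_of_pos hx0 _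
  have hrp1 : (1:ℝ) ≤ x ^ (1/β) := Real.one_le_rpow (by linarith) (by positivity)
  have hN1 : 1 ≤ N := Nat.one_le_iff_ne_zero.mpr (by
    simp only [hN_def, ne_eq, Nat.ceil_eq_zero, not_le]; exact hrp)
  have hNx : x ^ (1/β) ≤ (N : ℝ) := Nat.le_ceil _
  have hNx2 : (N : ℝ) ≤ 2 * x ^ (1/β) := by
    have := (Nat.ceil_lt_add_one hrp.le).le
    simp only [hN_def]; linarith
  set M : ℕ := max n N with hM_def
  -- reduce to range M
  have step1 : ∑ k ∈ Finset.range n, g k ≤ ∑ k ∈ Finset.range M, g k :=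
    Finset.sum_le_sum_of_subset_of_nonneg
      (Finset.range_subset_range.2 (le_max_left _ _)) (fun i _ _ => hg0 i)
  have split : ∑ k ∈ Finset.range M, g k
      = ∑ k ∈ Finset.range N, g k + ∑ k ∈ Finset.Ico N M, g k :=
    (Finset.sum_range_add_sum_Ico g (le_max_right n N)).symm
  -- part 1
  have part1 : ∑ k ∈ Finset.range N, g k
      ≤ (1 + Real.log 2 + (1/β) * Real.log x) * (x ^ 2)⁻¹ := by
    have h1 : ∑ k ∈ Finset.range N, g k
        ≤ ∑ k ∈ Finset.range N, ((k : ℝ) + 1)⁻¹ * (x ^ 2)⁻¹ := by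
      apply Finset.sum_le_sum
      intro k _
      calc g k ≤ (((k : ℝ) + 1) * x ^ 2)⁻¹ := min_le_left _ _
        _ = ((k : ℝ) + 1)⁻¹ * (x ^ 2)⁻¹ := by rw [mul_inv]
    have h2 : ∑ k ∈ Finset.range N, ((k : ℝ) + 1)⁻¹ * (x ^ 2)⁻¹
        = (harmonic N : ℝ) * (x ^ 2)⁻¹ := by
      rw [← Finset.sum_mul]
      congr 1
      rw [harmonic]
      push_cast
      rfl
    have h3 : (harmonic N : ℝ) ≤ 1 + Real.log N := harmonic_le_one_add_log N
    have h4 : Real.log N ≤ Real.log 2 + (1/β) * Real.log x := by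
      calc Real.log N ≤ Real.log (2 * x ^ (1/β)) :=
            Real.log_le_log (by exact_mod_cast Nat.cast_pos.mpr hN1) hNx2
        _ = Real.log 2 + Real.log (x ^ (1/β)) :=
            Real.log_mul two_ne_zero (by positivity)
        _ = Real.log 2 + (1/β) * Real.log x := by rw [Real.log_rpow hx0]
    calc ∑ k ∈ Finset.range N, g k ≤ (harmonic N : ℝ) * (x ^ 2)⁻¹ := h1.trans h2.le
      _ ≤ (1 + Real.log 2 + (1/β) * Real.log x) * (x ^ 2)⁻¹ := by
          apply mul_le_mul_of_nonneg_right _ (by positivity)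
          linarith
  -- part 2
  have part2 : ∑ k ∈ Finset.Ico N M, g k ≤ (2 * β)⁻¹ * (x ^ 2)⁻¹ := by
    set h : ℕ → ℝ := fun k => (((k : ℝ)) ^ (2 * β))⁻¹ with hh_def
    have key : ∀ k ∈ Finset.Ico N M, g k ≤ (2 * β)⁻¹ * (h k - h (k + 1)) := by
      intro k hk
      have hkN : N ≤ k := (Finset.mem_Ico.mp hk).1
      have hk1 : (1 : ℝ) ≤ (k : ℝ) := by exact_mod_cast hN1.trans hkN
      have hts := tel_step (2 * β) (k : ℝ) (by positivity) hk1
      have e1 : (((k : ℝ) + 1) ^ β) ^ 2 = ((k : ℝ) + 1) ^ (2 * β) := by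
        rw [← Real.rpow_natCast (((k : ℝ) + 1) ^ β) 2,
          ← Real.rpow_mul (by positivity)]
        norm_num [mul_comm]
      have e2 : g k ≤ (((k : ℝ) + 1) ^ (2 * β) * ((k : ℝ) + 1))⁻¹ := by
        refine (min_le_right _ _).trans (le_of_eq ?_)
        rw [e1]; ring_nf
      have e3 : h (k + 1) = (((k : ℝ) + 1) ^ (2 * β))⁻¹ := by
        simp only [hh_def]; push_cast; ring_nf
      have hβ2 : (0:ℝ) < 2 * β := by positivity
      calc g k ≤ (((k : ℝ) + 1) ^ (2 * β) * ((k : ℝ) + 1))⁻¹ := e2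
        _ ≤ (2 * β)⁻¹ * (((k:ℝ) ^ (2*β))⁻¹ - (((k:ℝ) + 1) ^ (2*β))⁻¹) := by
            calc (((k : ℝ) + 1) ^ (2 * β) * ((k : ℝ) + 1))⁻¹
                = (2*β)⁻¹ * ((2*β) * (((k : ℝ) + 1) ^ (2 * β) * ((k : ℝ) + 1))⁻¹) := by
                  field_simp
              _ ≤ (2*β)⁻¹ * ((((k:ℝ) ^ (2*β))⁻¹ - (((k:ℝ) + 1) ^ (2*β))⁻¹)) := by
                  apply mul_le_mul_of_nonneg_left hts (by positivity)
        _ = (2 * β)⁻¹ * (h k - h (k + 1)) := by rw [e3]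
    have hNM : N ≤ M := le_max_right n N
    have tele : ∑ k ∈ Finset.Ico N M, (h k - h (k + 1)) = h N - h M := by
      rw [Finset.sum_Ico_eq_sum_range]
      have tt := Finset.sum_range_sub' (fun i => h (N + i)) (M - N)
      simp only [add_zero] at tt
      rw [Nat.add_sub_cancel' hNM] at tt
      rw [← tt]
      simp [Nat.add_assoc]
    have hM0 : 0 ≤ h M := by positivity
    have hhN : h N ≤ (x ^ 2)⁻¹ := by
      have hx2 : (x : ℝ) ^ 2 ≤ (N : ℝ) ^ (2 * β) := by
        have : (x ^ (1/β)) ^ (2 * β) ≤ (N : ℝ) ^ (2 * β) :=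
          Real.rpow_le_rpow hrp.le hNx (by positivity)
        calc (x:ℝ) ^ 2 = x ^ ((2:ℕ):ℝ) := (Real.rpow_natCast x 2).symm
          _ = (x ^ (1/β)) ^ (2 * β) := by
              rw [← Real.rpow_mul hx0.le]
              congr 1
              field_simp; norm_num
          _ ≤ (N : ℝ) ^ (2 * β) := this
      exact inv_anti₀ (by positivity) hx2
    calc ∑ k ∈ Finset.Ico N M, g k
        ≤ ∑ k ∈ Finset.Ico N M, (2 * β)⁻¹ * (h k - h (k + 1)) := Finset.sum_le_sum key
      _ = (2 * β)⁻¹ * (h N - h M) := by rw [← Finset.mul_sum, tele]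
      _ ≤ (2 * β)⁻¹ * (x ^ 2)⁻¹ := by
          apply mul_le_mul_of_nonneg_left _ (by positivity)
          linarith
  -- combine
  have hl2 : Real.log 2 ≤ Real.log x := Real.log_le_log two_pos hx
  have hl2' : (0.6931471803 : ℝ) < Real.log 2 := Real.log_two_gt_d9
  have hb : (0:ℝ) < 1/β := by positivity
  have final : (1 + Real.log 2 + (1/β) * Real.log x) + (2 * β)⁻¹
      ≤ (3 + 2 / β) * Real.log x := by
    have h5 : (2 * β)⁻¹ = (1/β) * (1/2) := by field_simp
    have h6 : (1/β) * (1/2) ≤ (1/β) * Real.log x := by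
      apply mul_le_mul_of_nonneg_left _ hb.le
      linarith
    have h7 : 2 / β = 2 * (1/β) := by ring
    nlinarith [mul_le_mul_of_nonneg_left (hl2.trans_lt' hl2').le hb.le]
  calc ∑ k ∈ Finset.range n, g k
      ≤ (1 + Real.log 2 + (1/β) * Real.log x) * (x ^ 2)⁻¹ + (2 * β)⁻¹ * (x ^ 2)⁻¹ := by
        rw [split] at step1; linarith
    _ = ((1 + Real.log 2 + (1/β) * Real.log x) + (2 * β)⁻¹) * (x ^ 2)⁻¹ := by ring
    _ ≤ ((3 + 2 / β) * Real.log x) * (x ^ 2)⁻¹ := by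
        apply mul_le_mul_of_nonneg_right final (by positivity)
    _ = (3 + 2 / β) * Real.log x / x ^ 2 := by ring

lemma geo_bound (δ' : ℝ) (h0 : 0 < δ') (hπ : δ' ≤ π) (z : ℂ) (hz : |z.arg| ≤ π - δ')
    (hz0 : z ≠ 0) (t : ℝ) (ht : 0 ≤ t) :
    Real.sqrt ((1 + min (Real.cos (π - δ')) 0) / 2) * (‖z‖ + t)
      ≤ ‖z + (t : ℂ)‖ := by
  set a := Real.cos (π - δ') with ha_def
  have ha : -1 < a := by
    have h1 : Real.cos δ' < Real.cos 0 := Real.cos_lt_cos_of_nonneg_of_le_pi le_rfl hπ h0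
    rw [Real.cos_zero] at h1
    rw [ha_def, Real.cos_pi_sub]
    linarith
  set m := min a 0 with hm_def
  have hm_a : m ≤ a := min_le_left _ _
  have hm0 : m ≤ 0 := min_le_right _ _
  have hm1 : -1 < m := lt_min ha (by norm_num)
  have hc₁ : 0 < (1 + m) / 2 := by linarith
  have hx0 : 0 < ‖z‖ := norm_pos_iff.mpr hz0
  have hcos : a ≤ Real.cos z.arg := by
    rw [← Real.cos_abs]
    exact Real.cos_le_cos_of_nonneg_of_le_pi (abs_nonneg _) (by linarith) hz
  have hre : a * ‖z‖ ≤ z.re := by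
    have h2 : Real.cos z.arg = z.re / ‖z‖ := Complex.cos_arg hz0
    have h3 : z.re = ‖z‖ * Real.cos z.arg := by
      rw [h2]; field_simp
    nlinarith [mul_le_mul_of_nonneg_left hcos hx0.le]
  have habs2 : (‖z‖) ^ 2 = z.re ^ 2 + z.im ^ 2 := by
    rw [Complex.sq_norm, Complex.normSq_apply]; ring
  have key : (Real.sqrt ((1 + m) / 2) * (‖z‖ + t)) ^ 2
      ≤ (‖z + (t : ℂ)‖) ^ 2 := by
    have h2 : (‖z + (t : ℂ)‖) ^ 2 = (z.re + t) ^ 2 + z.im ^ 2 := by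
      rw [Complex.sq_norm, Complex.normSq_apply]
      simp only [Complex.add_re, Complex.add_im, Complex.ofReal_re, Complex.ofReal_im, add_zero]
      ring
    rw [h2, mul_pow, Real.sq_sqrt hc₁.le]
    nlinarith [mul_nonneg ht (sub_nonneg.2 hre),
      mul_nonneg (mul_nonneg ht hx0.le) (sub_nonneg.2 hm_a),
      mul_nonneg (show (0:ℝ) ≤ 1 - m by linarith) (sq_nonneg (‖z‖ - t)),
      habs2]
  have h0' : 0 ≤ Real.sqrt ((1 + m) / 2) * (‖z‖ + t) := by positivity
  have := Real.sqrt_le_sqrt key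
  rwa [Real.sqrt_sq h0', Real.sqrt_sq (norm_nonneg _)] at this

set_option maxHeartbeats 2000000

theorem stmt9 (β δ : ℝ) (hβ : 0 < β) (hδ : 0 < δ)
    (K : ℂ → ℂ)
    (hK : ∀ z : ℂ, K z = ∑' k : ℕ,
      1 / ((((k : ℝ) + 1 : ℝ) : ℂ) * (z + ((((k : ℝ) + 1) ^ β : ℝ) : ℂ)))) :
    ∃ C : ℝ, ∀ z : ℂ, |z.arg| < Real.pi - δ → 2 ≤ ‖z‖ →
      ‖z * deriv K z‖ ≤ C * Real.log (‖z‖) / ‖z‖ := by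
  -- the aperture constant
  set δ' : ℝ := min δ π with hδ'_def
  have hδ'0 : 0 < δ' := lt_min hδ Real.pi_pos
  have hδ'π : δ' ≤ π := min_le_right _ _
  set c : ℝ := Real.sqrt ((1 + min (Real.cos (π - δ')) 0) / 2) with hc_def
  have hc : 0 < c := by
    apply Real.sqrt_pos.2
    have ha : -1 < Real.cos (π - δ') := by
      have h1 : Real.cos δ' < Real.cos 0 := Real.cos_lt_cos_of_nonneg_of_le_pi le_rfl hδ'π hδ'0
      rw [Real.cos_zero] at h1
      rw [Real.cos_pi_sub]
      linarith
    rcases le_or_gt (Real.cos (π - δ')) 0 with h | h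
    · rw [min_eq_left h]; linarith
    · rw [min_eq_right h.le]; norm_num
  -- geometry, specialized
  have geo : ∀ z : ℂ, |z.arg| < π - δ → 2 ≤ ‖z‖ → ∀ t : ℝ, 0 ≤ t →
      c * (‖z‖ + t) ≤ ‖z + (t : ℂ)‖ := by
    intro z hz hz2 t ht
    have hz0 : z ≠ 0 := by
      intro h; rw [h] at hz2; simp at hz2; linarith
    have harg : |z.arg| ≤ π - δ' := by
      have := min_le_left δ π
      linarith
    exact geo_bound δ' hδ'0 hδ'π z harg hz0 t ht
  refine ⟨(3 + 2 / β) / c ^ 2, ?_⟩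
  intro z hz hz2
  set x : ℝ := ‖z‖ with hx_def
  have hx0 : (0:ℝ) < x := by linarith
  set T : ℕ → ℝ := fun k => ((k : ℝ) + 1) ^ β with hT_def
  have hT0 : ∀ k, 0 < T k := fun k => Real.rpow_pos_of_pos (by positivity) β
  have hT1 : ∀ k, 1 ≤ T k := fun k =>
    Real.one_le_rpow (le_add_of_nonneg_left (by positivity)) hβ.le
  set g' : ℕ → ℂ → ℂ := fun k w =>
    -(1 / ((((k : ℝ) + 1 : ℝ) : ℂ) * (w + ((T k : ℝ) : ℂ)) ^ 2)) with hg'_def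
  set s : Set ℂ := Metric.ball z (c * x / 2) with hs_def
  have hρ : 0 < c * x / 2 := by positivity
  -- lower bound on |w + T k| for w in the ball
  have hlow : ∀ w ∈ s, ∀ k, (c / 2) * (x + T k) ≤ ‖w + ((T k : ℝ) : ℂ)‖ := by
    intro w hw k
    have h1 : c * (x + T k) ≤ ‖z + ((T k : ℝ) : ℂ)‖ := geo z hz hz2 (T k) (hT0 k).le
    have h2 : ‖z - w‖ < c * x / 2 := by
      rw [← Complex.dist_eq, dist_comm]
      exact Metric.mem_ball.mp hw
    have h3 : ‖z + ((T k : ℝ) : ℂ)‖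
        ≤ ‖w + ((T k : ℝ) : ℂ)‖ + ‖z - w‖ := by
      calc ‖z + ((T k : ℝ) : ℂ)‖
          = ‖(w + ((T k : ℝ) : ℂ)) + (z - w)‖ := by
            rw [show z + ((T k : ℝ) : ℂ) = (w + ((T k : ℝ) : ℂ)) + (z - w) by ring]
        _ ≤ _ := norm_add_le _ _
    nlinarith [hT0 k, hc]
  have hzero : ∀ w ∈ s, ∀ k : ℕ, (((k : ℝ) + 1 : ℝ) : ℂ) * (w + ((T k : ℝ) : ℂ)) ≠ 0 := by
    intro w hw k
    apply mul_ne_zero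
    · simp only [ne_eq, Complex.ofReal_eq_zero]
      exact ne_of_gt (by positivity)
    · intro h
      have := hlow w hw k
      rw [h, norm_zero] at this
      nlinarith [hT0 k]
  -- derivatives
  have hderiv : ∀ k : ℕ, ∀ w ∈ s,
      HasDerivAt (fun w' => 1 / ((((k : ℝ) + 1 : ℝ) : ℂ) * (w' + ((T k : ℝ) : ℂ)))) (g' k w) w := by
    intro k w hw
    have hkc : ((((k : ℝ) + 1 : ℝ)) : ℂ) ≠ 0 := by
      simp only [ne_eq, Complex.ofReal_eq_zero]
      exact ne_of_gt (by positivity)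
    have hne := hzero w hw k
    have base : HasDerivAt (fun w' : ℂ => (((k : ℝ) + 1 : ℝ) : ℂ) * (w' + ((T k : ℝ) : ℂ)))
        ((((k : ℝ) + 1 : ℝ) : ℂ)) w := by
      simpa using ((hasDerivAt_id w).add_const (((T k : ℝ) : ℂ))).const_mul
        ((((k : ℝ) + 1 : ℝ)) : ℂ)
    have hinv := base.inv hne
    have heq : -((((k : ℝ) + 1 : ℝ) : ℂ)) / ((((k : ℝ) + 1 : ℝ) : ℂ) * (w + ((T k : ℝ) : ℂ))) ^ 2
        = g' k w := by
      rw [hg'_def]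
      simp only [neg_div]
      congr 1
      rw [show ((((k : ℝ) + 1 : ℝ) : ℂ) * (w + ((T k : ℝ) : ℂ))) ^ 2
        = (((k : ℝ) + 1 : ℝ) : ℂ) * ((((k : ℝ) + 1 : ℝ) : ℂ) * (w + ((T k : ℝ) : ℂ)) ^ 2) by ring]
      rw [div_mul_cancel_left₀ hkc, one_div]
    rw [← heq]
    simp only [one_div]; exact hinv
  -- summable bound on the derivatives over the ball
  set u : ℕ → ℝ := fun k => (4 / c ^ 2) * (((k : ℝ) + 1) * (((k : ℝ) + 1) ^ β) ^ 2)⁻¹ with hu_def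
  have hu : Summable u := by
    apply Summable.mul_left
    have he : ∀ k : ℕ, (((k : ℝ) + 1) * (((k : ℝ) + 1) ^ β) ^ 2)⁻¹
        = (((k + 1 : ℕ) : ℝ) ^ (1 + 2 * β))⁻¹ := by
      intro k
      have hp : (0:ℝ) < (k : ℝ) + 1 := by positivity
      push_cast
      rw [← Real.rpow_natCast (((k : ℝ) + 1) ^ β) 2, ← Real.rpow_mul hp.le]
      rw [show ((k:ℝ)+1) * ((k:ℝ)+1) ^ (β * (2:ℕ)) = ((k:ℝ)+1) ^ (1:ℝ) * ((k:ℝ)+1) ^ (β * (2:ℕ)) by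
        rw [Real.rpow_one]]
      rw [← Real.rpow_add hp]
      norm_num
      ring_nf
    simp_rw [he]
    have h5 : Summable (fun n : ℕ => (((n : ℝ)) ^ (1 + 2 * β))⁻¹) :=
      Real.summable_nat_rpow_inv.2 (by linarith)
    exact_mod_cast (summable_nat_add_iff 1).2 h5
  have hbound : ∀ k : ℕ, ∀ w ∈ s, ‖g' k w‖ ≤ u k := by
    intro k w hw
    have hlw := hlow w hw k
    have habs : ‖g' k w‖ = (((k : ℝ) + 1) * (‖w + ((T k : ℝ) : ℂ)‖) ^ 2)⁻¹ := by
      simp only [hg'_def, norm_neg, one_div, norm_inv, norm_mul, norm_pow,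
        Complex.norm_real, Real.norm_eq_abs]
      rw [_root_.abs_of_nonneg (show (0:ℝ) ≤ (k : ℝ) + 1 by positivity)]
    rw [habs, hu_def]
    have h6 : (c / 2) * T k ≤ ‖w + ((T k : ℝ) : ℂ)‖ := by
      nlinarith [hT0 k, hc, hlw, hx0]
    have h7 : (c ^ 2 / 4) * (T k) ^ 2 ≤ (‖w + ((T k : ℝ) : ℂ)‖) ^ 2 := by
      have := pow_le_pow_left₀ (by positivity : (0:ℝ) ≤ c / 2 * T k) h6 2
      calc (c ^ 2 / 4) * (T k) ^ 2 = (c / 2 * T k) ^ 2 := by ring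
        _ ≤ _ := this
    have h8 : ((k : ℝ) + 1) * ((c ^ 2 / 4) * (T k) ^ 2)
        ≤ ((k : ℝ) + 1) * (‖w + ((T k : ℝ) : ℂ)‖) ^ 2 := by
      apply mul_le_mul_of_nonneg_left h7 (by positivity)
    have h9 := inv_anti₀ (by positivity) h8
    calc (((k : ℝ) + 1) * (‖w + ((T k : ℝ) : ℂ)‖) ^ 2)⁻¹
        ≤ (((k : ℝ) + 1) * ((c ^ 2 / 4) * (T k) ^ 2))⁻¹ := h9
      _ = 4 / c ^ 2 * (((k : ℝ) + 1) * (((k : ℝ) + 1) ^ β) ^ 2)⁻¹ := by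
          rw [hT_def]
          field_simp
  -- summability of the series at z
  have hsumf : Summable (fun k : ℕ =>
      1 / ((((k : ℝ) + 1 : ℝ) : ℂ) * (z + ((T k : ℝ) : ℂ)))) := by
    have hvs : Summable (fun k : ℕ => (1 / c) * (((k : ℝ) + 1) * ((k : ℝ) + 1) ^ β)⁻¹) := by
      apply Summable.mul_left
      have he : ∀ k : ℕ, (((k : ℝ) + 1) * ((k : ℝ) + 1) ^ β)⁻¹
          = (((k + 1 : ℕ) : ℝ) ^ (1 + β))⁻¹ := by
        intro k
        have hp : (0:ℝ) < (k : ℝ) + 1 := by positivity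
        push_cast
        rw [show ((k:ℝ)+1) * ((k:ℝ)+1) ^ β = ((k:ℝ)+1) ^ (1:ℝ) * ((k:ℝ)+1) ^ β by
          rw [Real.rpow_one], ← Real.rpow_add hp]
      simp_rw [he]
      have h5 : Summable (fun n : ℕ => (((n : ℝ)) ^ (1 + β))⁻¹) :=
        Real.summable_nat_rpow_inv.2 (by linarith)
      exact_mod_cast (summable_nat_add_iff 1).2 h5
    apply Summable.of_norm_bounded hvs
    intro k
    have hgeo := geo z hz hz2 (T k) (hT0 k).le
    have habs : ‖1 / ((((k : ℝ) + 1 : ℝ) : ℂ) * (z + ((T k : ℝ) : ℂ)))‖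
        = (((k : ℝ) + 1) * ‖z + ((T k : ℝ) : ℂ)‖)⁻¹ := by
      simp only [one_div, norm_inv, norm_mul, Complex.norm_real, Real.norm_eq_abs]
      rw [_root_.abs_of_nonneg (show (0:ℝ) ≤ (k : ℝ) + 1 by positivity)]
    rw [habs]
    have h6 : c * T k ≤ ‖z + ((T k : ℝ) : ℂ)‖ := by
      nlinarith [hT0 k, hc, hx0]
    have h8 : ((k : ℝ) + 1) * (c * T k)
        ≤ ((k : ℝ) + 1) * ‖z + ((T k : ℝ) : ℂ)‖ := by
      apply mul_le_mul_of_nonneg_left h6 (by positivity)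
    calc (((k : ℝ) + 1) * ‖z + ((T k : ℝ) : ℂ)‖)⁻¹
        ≤ (((k : ℝ) + 1) * (c * T k))⁻¹ := by
          apply inv_anti₀ (by positivity) h8
      _ = (1 / c) * (((k : ℝ) + 1) * ((k : ℝ) + 1) ^ β)⁻¹ := by
          rw [hT_def]
          field_simp
  -- the derivative of K
  have hds := hasDerivAt_tsum_of_isPreconnected hu Metric.isOpen_ball
    (convex_ball z (c * x / 2)).isPreconnected hderiv hbound
    (Metric.mem_ball_self hρ) hsumf (Metric.mem_ball_self hρ)
  have hKd : deriv K z = ∑' k, g' k z := by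
    have hKeq : K = fun w => ∑' k : ℕ,
        1 / ((((k : ℝ) + 1 : ℝ) : ℂ) * (w + ((T k : ℝ) : ℂ))) := funext hK
    rw [hKeq]
    exact hds.deriv
  -- summability of norms at z
  have hsn : Summable (fun k => ‖g' k z‖) :=
    Summable.of_nonneg_of_le (fun k => norm_nonneg _)
      (fun k => hbound k z (Metric.mem_ball_self hρ)) hu
  -- final estimate
  have hnorm_sum : ‖∑' k, g' k z‖ ≤ ∑' k, ‖g' k z‖ := norm_tsum_le_tsum_norm hsn
  have htsum : ∑' k, ‖g' k z‖ ≤ (1 / c ^ 2) * ((3 + 2 / β) * Real.log x / x ^ 2) := by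
    apply Real.tsum_le_of_sum_range_le (fun k => norm_nonneg _)
    intro n
    have hterm : ∀ k : ℕ, ‖g' k z‖ ≤ (1 / c ^ 2) *
        min ((((k : ℝ) + 1) * x ^ 2)⁻¹) ((((k : ℝ) + 1) * (((k : ℝ) + 1) ^ β) ^ 2)⁻¹) := by
      intro k
      have hgeo2 := geo z hz hz2 (T k) (hT0 k).le
      have habs : ‖g' k z‖ = (((k : ℝ) + 1) * (‖z + ((T k : ℝ) : ℂ)‖) ^ 2)⁻¹ := by
        simp only [hg'_def, norm_neg, one_div, norm_inv, norm_mul, norm_pow,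
          Complex.norm_real, Real.norm_eq_abs]
        rw [_root_.abs_of_nonneg (show (0:ℝ) ≤ (k : ℝ) + 1 by positivity)]
      rw [habs]
      rw [mul_min_of_nonneg _ _ (by positivity : (0:ℝ) ≤ 1 / c ^ 2)]
      have hax : c * x ≤ ‖z + ((T k : ℝ) : ℂ)‖ := by nlinarith [hT0 k, hc]
      have haT : c * T k ≤ ‖z + ((T k : ℝ) : ℂ)‖ := by nlinarith [hT0 k, hc, hx0]
      apply le_min
      · have h7 : ((k : ℝ) + 1) * (c ^ 2 * x ^ 2)
            ≤ ((k : ℝ) + 1) * (‖z + ((T k : ℝ) : ℂ)‖) ^ 2 := by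
          apply mul_le_mul_of_nonneg_left _ (by positivity)
          have := pow_le_pow_left₀ (by positivity : (0:ℝ) ≤ c * x) hax 2
          calc c ^ 2 * x ^ 2 = (c * x) ^ 2 := by ring
            _ ≤ _ := this
        calc (((k : ℝ) + 1) * (‖z + ((T k : ℝ) : ℂ)‖) ^ 2)⁻¹
            ≤ (((k : ℝ) + 1) * (c ^ 2 * x ^ 2))⁻¹ := inv_anti₀ (by positivity) h7
          _ = 1 / c ^ 2 * (((k : ℝ) + 1) * x ^ 2)⁻¹ := by field_simp
      · have h7 : ((k : ℝ) + 1) * (c ^ 2 * (T k) ^ 2)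
            ≤ ((k : ℝ) + 1) * (‖z + ((T k : ℝ) : ℂ)‖) ^ 2 := by
          apply mul_le_mul_of_nonneg_left _ (by positivity)
          have := pow_le_pow_left₀ (by positivity : (0:ℝ) ≤ c * T k) haT 2
          calc c ^ 2 * (T k) ^ 2 = (c * T k) ^ 2 := by ring
            _ ≤ _ := this
        calc (((k : ℝ) + 1) * (‖z + ((T k : ℝ) : ℂ)‖) ^ 2)⁻¹
            ≤ (((k : ℝ) + 1) * (c ^ 2 * (T k) ^ 2))⁻¹ := inv_anti₀ (by positivity) h7
          _ = 1 / c ^ 2 * (((k : ℝ) + 1) * (((k : ℝ) + 1) ^ β) ^ 2)⁻¹ := by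
              rw [hT_def]; field_simp
    calc ∑ k ∈ Finset.range n, ‖g' k z‖
        ≤ ∑ k ∈ Finset.range n, (1 / c ^ 2) *
            min ((((k : ℝ) + 1) * x ^ 2)⁻¹) ((((k : ℝ) + 1) * (((k : ℝ) + 1) ^ β) ^ 2)⁻¹) :=
          Finset.sum_le_sum (fun k _ => hterm k)
      _ = (1 / c ^ 2) * ∑ k ∈ Finset.range n,
            min ((((k : ℝ) + 1) * x ^ 2)⁻¹) ((((k : ℝ) + 1) * (((k : ℝ) + 1) ^ β) ^ 2)⁻¹) := by
          rw [Finset.mul_sum]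
      _ ≤ (1 / c ^ 2) * ((3 + 2 / β) * Real.log x / x ^ 2) := by
          apply mul_le_mul_of_nonneg_left (sum_min_bound β x hβ hz2 n) (by positivity)
  calc ‖z * deriv K z‖ = x * ‖∑' k, g' k z‖ := by
        rw [hKd, norm_mul]
    _ ≤ x * ((1 / c ^ 2) * ((3 + 2 / β) * Real.log x / x ^ 2)) := by
        apply mul_le_mul_of_nonneg_left _ hx0.le
        calc ‖∑' k, g' k z‖ = ‖∑' k, g' k z‖ := rfl
          _ ≤ ∑' k, ‖g' k z‖ := hnorm_sum
          _ ≤ _ := htsum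
    _ = (3 + 2 / β) / c ^ 2 * Real.log x / x := by
        have halg : ∀ X L A C2 : ℝ, X ≠ 0 → C2 ≠ 0 →
            X * ((1 / C2) * (A * L / X ^ 2)) = A / C2 * L / X := by
          intros X L A C2 hX hC2
          field_simp
        exact halg x (Real.log x) (3 + 2 / β) (c ^ 2) (ne_of_gt hx0) (by positivity)
end

section
/- Let β > 0, 0 < r ≤ 1, and ρ ≥ 2. Then ∫₁^∞ dx / (x^α (ρ² + x^{2β})) ≤ C · ρ^{-r-1} when r < 1, and ≤ C · log(ρ)/ρ² when r = 1, for a constant C depending only on α, β, where r = (α + β − 1)/β and 0 < α ≤ 1. -/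
open Complex Real MeasureTheory Set Filter

lemma aux_key (α β ρ : ℝ) (hα0 : 0 < α) (hβ : 0 < β) (hαβ : 1 < α + β) (hρ : 2 ≤ ρ) :
    ∫ x in Set.Ioi (1:ℝ), 1 / (x ^ α * (ρ ^ 2 + x ^ (2*β))) ≤
      (1/ρ^2) * (∫ x in Set.Ioc (1:ℝ) (ρ ^ (1/β)), x ^ (-α))
      + (ρ ^ (1/β)) ^ (1 - α - 2*β) / (α + 2*β - 1) := by
  have hρ0 : (0:ℝ) < ρ := by linarith
  set X := ρ ^ (1/β) with hXdef
  have hX1 : (1:ℝ) ≤ X := Real.one_le_rpow (by linarith) (by positivity)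
  have hX0 : (0:ℝ) < X := by linarith
  have hmeas : Measurable (fun x : ℝ => 1 / (x ^ α * (ρ ^ 2 + x ^ (2*β)))) := by fun_prop
  have hexp : -(α + 2*β) < -1 := by linarith
  have hbound2 : ∀ x : ℝ, 1 ≤ x →
      1 / (x ^ α * (ρ ^ 2 + x ^ (2*β))) ≤ x ^ (-(α + 2*β)) := by
    intro x hx
    have hx0 : (0:ℝ) < x := by linarith
    rw [Real.rpow_neg hx0.le, Real.rpow_add hx0, ← one_div]
    apply one_div_le_one_div_of_le (by positivity)
    nlinarith [Real.rpow_pos_of_pos hx0 α, Real.rpow_pos_of_pos hx0 (2*β)]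
  have hint : IntegrableOn (fun x : ℝ => 1 / (x ^ α * (ρ ^ 2 + x ^ (2*β)))) (Set.Ioi (1:ℝ)) := by
    apply Integrable.mono' (integrableOn_Ioi_rpow_of_lt hexp zero_lt_one)
      hmeas.aestronglyMeasurable.restrict
    filter_upwards [ae_restrict_mem measurableSet_Ioi] with x hx
    have hx0 : (0:ℝ) < x := lt_trans one_pos hx
    have h1 : (0:ℝ) < x ^ α := Real.rpow_pos_of_pos hx0 α
    have h2 : (0:ℝ) < x ^ (2*β) := Real.rpow_pos_of_pos hx0 (2*β)
    rw [Real.norm_of_nonneg (one_div_nonneg.mpr (by positivity))]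
    exact hbound2 x (le_of_lt hx)
  have hsplit : ∫ x in Set.Ioi (1:ℝ), 1 / (x ^ α * (ρ ^ 2 + x ^ (2*β))) =
      (∫ x in Set.Ioc (1:ℝ) X, 1 / (x ^ α * (ρ ^ 2 + x ^ (2*β))))
      + ∫ x in Set.Ioi X, 1 / (x ^ α * (ρ ^ 2 + x ^ (2*β))) := by
    rw [← setIntegral_union (Set.Ioc_disjoint_Ioi le_rfl) measurableSet_Ioi
      (hint.mono_set Set.Ioc_subset_Ioi_self) (hint.mono_set (Set.Ioi_subset_Ioi hX1)),
      Set.Ioc_union_Ioi_eq_Ioi hX1]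
  rw [hsplit]
  have hb1 : (∫ x in Set.Ioc (1:ℝ) X, 1 / (x ^ α * (ρ ^ 2 + x ^ (2*β))))
      ≤ (1/ρ^2) * ∫ x in Set.Ioc (1:ℝ) X, x ^ (-α) := by
    rw [← integral_const_mul]
    apply setIntegral_mono_on (hint.mono_set Set.Ioc_subset_Ioi_self)
    · apply Integrable.const_mul
      apply IntegrableOn.mono_set _ Set.Ioc_subset_Icc_self
      apply ContinuousOn.integrableOn_Icc
      exact ContinuousOn.rpow_const continuousOn_id
        (fun x hx => Or.inl (ne_of_gt (lt_of_lt_of_le one_pos hx.1)))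
    · exact measurableSet_Ioc
    · intro x hx
      have hx0 : (0:ℝ) < x := by linarith [hx.1]
      rw [Real.rpow_neg hx0.le,
        show (1/ρ^2) * (x^α)⁻¹ = 1 / (ρ^2 * x^α) by rw [one_div, ← mul_inv, one_div]]
      apply one_div_le_one_div_of_le (by positivity)
      nlinarith [Real.rpow_pos_of_pos hx0 α, Real.rpow_pos_of_pos hx0 (2*β)]
  have hb2 : (∫ x in Set.Ioi X, 1 / (x ^ α * (ρ ^ 2 + x ^ (2*β))))
      ≤ X ^ (1 - α - 2*β) / (α + 2*β - 1) := by
    have hI := integral_Ioi_rpow_of_lt hexp hX0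
    have heq : -X ^ (-(α + 2*β) + 1) / (-(α + 2*β) + 1) = X ^ (1 - α - 2*β) / (α + 2*β - 1) := by
      rw [show -(α + 2*β) + 1 = 1 - α - 2*β by ring,
        show α + 2*β - 1 = -(1 - α - 2*β) by ring, div_neg, neg_div]
    calc (∫ x in Set.Ioi X, 1 / (x ^ α * (ρ ^ 2 + x ^ (2*β))))
        ≤ ∫ x in Set.Ioi X, x ^ (-(α + 2*β)) := by
          apply setIntegral_mono_on (hint.mono_set (Set.Ioi_subset_Ioi hX1))
            (integrableOn_Ioi_rpow_of_lt hexp hX0) measurableSet_Ioi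
          intro x hx
          exact hbound2 x (le_trans hX1 (le_of_lt hx))
      _ = X ^ (1 - α - 2*β) / (α + 2*β - 1) := by rw [hI, heq]
  linarith

theorem stmt10 (α β : ℝ) (hα0 : 0 < α) (hα1 : α ≤ 1) (hβ : 0 < β)
    (r : ℝ) (hr : r = (α + β - 1) / β) (hr0 : 0 < r) (hr1 : r ≤ 1) :
    ∃ C : ℝ, ∀ ρ : ℝ, 2 ≤ ρ →
      ((r < 1 → ∫ x in Set.Ioi (1 : ℝ), 1 / (x ^ α * (ρ ^ 2 + x ^ (2 * β))) ≤ C * ρ ^ (-r - 1)) ∧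
       (r = 1 → ∫ x in Set.Ioi (1 : ℝ), 1 / (x ^ α * (ρ ^ 2 + x ^ (2 * β))) ≤ C * Real.log ρ / ρ ^ 2)) := by
  have hαβ : 1 < α + β := by
    have h := hr0
    rw [hr, div_pos_iff] at h
    rcases h with ⟨h1, _⟩ | ⟨_, h2⟩ <;> linarith
  have hαβ2 : 0 < α + 2*β - 1 := by linarith
  rcases lt_or_eq_of_le hα1 with hα | hα
  · -- α < 1 case, r < 1
    have hrlt : r < 1 := by rw [hr, div_lt_one hβ]; linarith
    refine ⟨1/(1-α) + 1/(α+2*β-1), fun ρ hρ => ⟨fun _ => ?_, fun h1 => absurd h1 (ne_of_lt hrlt)⟩⟩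
    have hρ0 : (0:ℝ) < ρ := by linarith
    set X := ρ ^ (1/β) with hXdef
    have hX1 : (1:ℝ) ≤ X := Real.one_le_rpow (by linarith) (by positivity)
    have hXc : ∀ c : ℝ, X ^ c = ρ ^ (c/β) := by
      intro c
      rw [hXdef, ← Real.rpow_mul hρ0.le, show (1/β)*c = c/β by ring]
    have e1 : (1-α)/β - 2 = -r - 1 := by rw [hr]; field_simp; ring
    have e2 : (1-α-2*β)/β = -r - 1 := by rw [hr]; field_simp; ring
    have hI : (∫ x in Set.Ioc (1:ℝ) X, x ^ (-α)) = (X ^ (1-α) - 1)/(1-α) := by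
      rw [← intervalIntegral.integral_of_le hX1,
        integral_rpow (Or.inl (by linarith : (-1:ℝ) < -α))]
      rw [Real.one_rpow, show -α + 1 = 1 - α by ring]
    have h5 : (1/ρ^2) * ρ ^ ((1-α)/β) = ρ ^ (-r-1) := by
      rw [← e1, ← Real.rpow_natCast ρ 2, one_div, ← Real.rpow_neg hρ0.le, ← Real.rpow_add hρ0]
      congr 1
      push_cast
      ring
    calc ∫ x in Set.Ioi (1 : ℝ), 1 / (x ^ α * (ρ ^ 2 + x ^ (2 * β)))
        ≤ (1/ρ^2) * (∫ x in Set.Ioc (1:ℝ) X, x ^ (-α)) + X ^ (1 - α - 2*β) / (α + 2*β - 1) :=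
          aux_key α β ρ hα0 hβ hαβ hρ
      _ = (1/ρ^2) * ((ρ ^ ((1-α)/β) - 1)/(1-α)) + ρ ^ (-r-1) / (α + 2*β - 1) := by
          rw [hI, hXc, hXc, e2]
      _ ≤ (1/ρ^2) * (ρ ^ ((1-α)/β)/(1-α)) + ρ ^ (-r-1) / (α + 2*β - 1) := by
          have h7 : (ρ ^ ((1-α)/β) - 1)/(1-α) ≤ ρ ^ ((1-α)/β)/(1-α) :=
            (div_le_div_iff_of_pos_right (by linarith)).mpr (by linarith)
          have := mul_le_mul_of_nonneg_left h7 (by positivity : (0:ℝ) ≤ 1/ρ^2)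
          linarith
      _ = ρ ^ (-r-1)/(1-α) + ρ ^ (-r-1) / (α + 2*β - 1) := by
          rw [show (1/ρ^2) * (ρ ^ ((1-α)/β)/(1-α)) = ((1/ρ^2) * ρ ^ ((1-α)/β))/(1-α) by ring, h5]
      _ = (1/(1-α) + 1/(α+2*β-1)) * ρ ^ (-r-1) := by ring
  · -- α = 1 case, r = 1
    subst hα
    have hr1' : r = 1 := by rw [hr]; field_simp; ring
    refine ⟨1/β + 1/(2*β*Real.log 2), fun ρ hρ => ⟨fun h => absurd hr1' (ne_of_lt h),
      fun _ => ?_⟩⟩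
    have hρ0 : (0:ℝ) < ρ := by linarith
    set X := ρ ^ (1/β) with hXdef
    have hX1 : (1:ℝ) ≤ X := Real.one_le_rpow (by linarith) (by positivity)
    have hI : (∫ x in Set.Ioc (1:ℝ) X, x ^ (-(1:ℝ))) = (1/β) * Real.log ρ := by
      rw [← intervalIntegral.integral_of_le hX1]
      simp_rw [Real.rpow_neg_one]
      rw [integral_inv (by rw [Set.uIcc_of_le hX1]; intro h; linarith [h.1]), div_one, hXdef,
        Real.log_rpow hρ0]
    have hX2 : X ^ (1 - 1 - 2*β) = 1/ρ^2 := by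
      rw [hXdef, ← Real.rpow_mul hρ0.le,
        show (1/β)*(1-1-2*β) = (-2:ℝ) by field_simp; ring,
        show (-2:ℝ) = ((-2:ℤ):ℝ) by norm_num, Real.rpow_intCast, zpow_neg, one_div]
      norm_num [zpow_two, pow_two]
    have hlog2 : (0:ℝ) < Real.log 2 := Real.log_pos one_lt_two
    have hL : Real.log 2 ≤ Real.log ρ := Real.log_le_log (by norm_num) hρ
    calc ∫ x in Set.Ioi (1 : ℝ), 1 / (x ^ (1:ℝ) * (ρ ^ 2 + x ^ (2 * β)))
        ≤ (1/ρ^2) * (∫ x in Set.Ioc (1:ℝ) X, x ^ (-(1:ℝ))) + X ^ (1 - 1 - 2*β) / (1 + 2*β - 1) :=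
          aux_key 1 β ρ one_pos hβ (by linarith) hρ
      _ = (1/ρ^2) * ((1/β) * Real.log ρ) + (1/ρ^2) / (2*β) := by
          rw [hI, hX2, show (1:ℝ) + 2*β - 1 = 2*β by ring]
      _ ≤ (1/ρ^2) * ((1/β) * Real.log ρ) + (1/ρ^2) * ((1/(2*β*Real.log 2)) * Real.log ρ) := by
          have h6 : (1/ρ^2)/(2*β) ≤ (1/ρ^2) * ((1/(2*β*Real.log 2)) * Real.log ρ) := by
            rw [div_eq_mul_inv]
            apply mul_le_mul_of_nonneg_left _ (by positivity)
            rw [show (1/(2*β*Real.log 2)) * Real.log ρ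
              = (Real.log ρ/Real.log 2) * (2*β)⁻¹ by ring]
            nth_rewrite 1 [← one_mul (2*β)⁻¹]
            exact mul_le_mul_of_nonneg_right ((one_le_div hlog2).mpr hL) (by positivity)
          linarith
      _ = (1/β + 1/(2*β*Real.log 2)) * Real.log ρ / ρ^2 := by field_simp
end

section
/- Let 0 < α ≤ 1, β > 0, α + β > 1, and fix δ > 0. Let w(x) = 1/(x^α(z + x^β)) for a fixed z with |arg z| < π − δ and |z| ≥ 1. Then for every integer k ≥ 1 and all x ∈ [k, k+1], |w(x) − w(k)| ≤ C / (k^{α+1} (|z| + k^β)) for a constant C depending only on α, β, δ. -/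
open Complex Real MeasureTheory Set Filter

lemma sector_est (δ : ℝ) (hδ : 0 ≤ δ) (z : ℂ) (hz0 : z ≠ 0) (hz : |z.arg| < Real.pi - δ) (t : ℝ) (ht : 0 ≤ t) :
    Real.sqrt (min (1 - Real.cos δ) 1 / 2) * (‖z‖ + t) ≤ ‖(z + t)‖ := by
  set m := min (1 - Real.cos δ) 1 with hmdef
  have hc1 : Real.cos δ ≤ 1 := Real.cos_le_one δ
  have hcneg : -1 ≤ Real.cos δ := Real.neg_one_le_cos δ
  have hm0 : 0 ≤ m := le_min (by linarith) one_pos.le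
  have hm1 : m ≤ 1 - Real.cos δ := min_le_left _ _
  have habs : 0 < ‖z‖ := norm_pos_iff.mpr hz0
  have hre : -(Real.cos δ * ‖z‖) ≤ z.re := by
    have hc : Real.cos (Real.pi - δ) ≤ Real.cos |z.arg| :=
      Real.cos_le_cos_of_nonneg_of_le_pi (abs_nonneg _)
        (by linarith) hz.le
    rw [Real.cos_pi_sub, Real.cos_abs] at hc
    have harg : Real.cos z.arg = z.re / ‖z‖ := Complex.cos_arg hz0
    have : z.re = Real.cos z.arg * ‖z‖ := by
      rw [harg]; field_simp
    nlinarith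
  have key : m / 2 * (‖z‖ + t) ^ 2 ≤ Complex.normSq (z + t) := by
    have hnsq : Complex.normSq (z + (t : ℂ)) = (z.re + t) ^ 2 + z.im ^ 2 := by
      simp [Complex.normSq_apply]; ring
    have hsq : ‖z‖ ^ 2 = z.re ^ 2 + z.im ^ 2 := by
      rw [Complex.sq_norm, Complex.normSq_apply]; ring
    rw [hnsq]
    nlinarith [sq_nonneg (‖z‖ - t), sq_nonneg (‖z‖ + t),
      mul_nonneg ht (by linarith : (0:ℝ) ≤ z.re + Real.cos δ * ‖z‖),
      mul_nonneg (by linarith : (0:ℝ) ≤ 1 - Real.cos δ - m) (sq_nonneg (‖z‖ + t)),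
      mul_nonneg (by linarith : (0:ℝ) ≤ 1 + Real.cos δ) (sq_nonneg (‖z‖ - t))]
  have h1 : ‖(z + t)‖ = Real.sqrt (Complex.normSq (z + t)) := Complex.norm_def _
  have h2 : Real.sqrt (m / 2) * (‖z‖ + t)
      = Real.sqrt (m / 2 * (‖z‖ + t) ^ 2) := by
    rw [Real.sqrt_mul (by linarith), Real.sqrt_sq (by positivity)]
  rw [h1, h2]
  exact Real.sqrt_le_sqrt key

set_option maxHeartbeats 1000000 in
theorem stmt18 (α β δ : ℝ) (hα0 : 0 < α) (hα1 : α ≤ 1) (hβ : 0 < β) (hαβ : 1 < α + β)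
    (hδ : 0 < δ) :
    ∃ C : ℝ, ∀ z : ℂ, |z.arg| < Real.pi - δ → 1 ≤ ‖z‖ →
      ∀ k : ℕ, 1 ≤ k → ∀ x : ℝ, x ∈ Set.Icc (k : ℝ) ((k : ℝ) + 1) →
        ‖(1 / (((x ^ α : ℝ) : ℂ) * (z + ((x ^ β : ℝ) : ℂ)))
            - 1 / (((((k : ℝ)) ^ α : ℝ) : ℂ) * (z + ((((k : ℝ)) ^ β : ℝ) : ℂ))))‖
          ≤ C / ((k : ℝ) ^ (α + 1) * (‖z‖ + (k : ℝ) ^ β)) := by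
  set C0 : ℝ := α + (α + β) * (2:ℝ) ^ (α + β) with hC0def
  refine ⟨C0 / (min (1 - Real.cos δ) 1 / 2), ?_⟩
  intro z hz hz1 k hk x hx
  set m := min (1 - Real.cos δ) 1 with hmdef
  have hδπ : δ < Real.pi := by nlinarith [abs_nonneg z.arg]
  have hcos : Real.cos δ < 1 := by
    have := Real.cos_lt_cos_of_nonneg_of_le_pi le_rfl hδπ.le hδ
    simpa using this
  have hm0 : 0 < m := lt_min (by linarith) one_pos
  have hz0 : z ≠ 0 := by
    intro h; rw [h] at hz1; simp at hz1; linarith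
  set K : ℝ := (k : ℝ) with hKdef
  have hK1 : (1:ℝ) ≤ K := by rw [hKdef]; exact_mod_cast hk
  have hK0 : (0:ℝ) < K := by linarith
  obtain ⟨hxK, hx1⟩ := hx
  have hx0 : (0:ℝ) < x := by linarith
  set r := ‖z‖ with hrdef
  have hr1 : (1:ℝ) ≤ r := hz1
  -- Bernoulli bound 1 : x^α ≤ K^α + α * K^(α-1)
  have hb1 : x ^ α ≤ K ^ α + α * K ^ (α - 1) := by
    have hs0 : 0 ≤ (x - K) / K := div_nonneg (by linarith) hK0.le
    have hs : -1 ≤ (x - K) / K := by linarith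
    have hb : (1 + (x - K) / K) ^ α ≤ 1 + α * ((x - K) / K) :=
      rpow_one_add_le_one_add_mul_self hs hα0.le hα1
    have hxe : x ^ α = K ^ α * (1 + (x - K) / K) ^ α := by
      rw [← Real.mul_rpow hK0.le (by linarith)]
      congr 1; field_simp; ring
    have hK' : K ^ (α - 1) = K ^ α / K := Real.rpow_sub_one hK0.ne' α
    calc x ^ α = K ^ α * (1 + (x - K) / K) ^ α := hxe
      _ ≤ K ^ α * (1 + α * ((x - K) / K)) := by
          apply mul_le_mul_of_nonneg_left hb (Real.rpow_nonneg hK0.le α)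
      _ = K ^ α + α * (K ^ α / K) * (x - K) := by field_simp
      _ ≤ K ^ α + α * K ^ (α - 1) := by
          rw [hK']
          nlinarith [Real.rpow_nonneg hK0.le α, div_nonneg (Real.rpow_nonneg hK0.le α) hK0.le,
            mul_nonneg hα0.le (div_nonneg (Real.rpow_nonneg hK0.le α) hK0.le)]
  -- Bernoulli bound 2 : x^(α+β) ≤ K^(α+β) + (α+β) * 2^(α+β) * K^(α+β-1)
  have hb2 : x ^ (α + β) ≤ K ^ (α + β) + (α + β) * (2:ℝ) ^ (α + β) * K ^ (α + β - 1) := by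
    have he0 : (K - x) / x = K / x - 1 := by field_simp
    have hs0 : 0 ≤ K / x := div_nonneg hK0.le hx0.le
    have hs : -1 ≤ (K - x) / x := by rw [he0]; linarith
    have hb : 1 + (α + β) * ((K - x) / x) ≤ (1 + (K - x) / x) ^ (α + β) :=
      one_add_mul_self_le_rpow_one_add hs hαβ.le
    have hKe : K ^ (α + β) = x ^ (α + β) * (1 + (K - x) / x) ^ (α + β) := by
      rw [← Real.mul_rpow hx0.le (by linarith)]
      congr 1; field_simp; ring
    have step1 : x ^ (α + β) ≤ K ^ (α + β) + (α + β) * x ^ (α + β - 1) * (x - K) := by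
      have hx' : x ^ (α + β - 1) = x ^ (α + β) / x := Real.rpow_sub_one hx0.ne' (α + β)
      have h2 : x ^ (α + β) * (1 + (α + β) * ((K - x) / x)) ≤ K ^ (α + β) := by
        rw [hKe]
        exact mul_le_mul_of_nonneg_left hb (Real.rpow_nonneg hx0.le _)
      have h3 : x ^ (α + β) * (1 + (α + β) * ((K - x) / x))
          = x ^ (α + β) - (α + β) * (x ^ (α + β) / x) * (x - K) := by
        field_simp; ring
      rw [hx']
      linarith [h2, h3 ▸ h2]
    have hxle : x ≤ 2 * K := by linarith
    have hmono : x ^ (α + β - 1) ≤ (2 * K) ^ (α + β - 1) :=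
      Real.rpow_le_rpow hx0.le hxle (by linarith)
    have h2K : (2 * K) ^ (α + β - 1) = (2:ℝ) ^ (α + β - 1) * K ^ (α + β - 1) :=
      Real.mul_rpow (by norm_num) hK0.le
    have h2exp : (2:ℝ) ^ (α + β - 1) ≤ (2:ℝ) ^ (α + β) :=
      Real.rpow_le_rpow_of_exponent_le (by norm_num) (by linarith)
    have hxK1 : x - K ≤ 1 := by linarith
    have hfin : (α + β) * x ^ (α + β - 1) * (x - K)
        ≤ (α + β) * (2:ℝ) ^ (α + β) * K ^ (α + β - 1) := by
      have hKnn : (0:ℝ) ≤ K ^ (α + β - 1) := Real.rpow_nonneg hK0.le _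
      have hxnn : (0:ℝ) ≤ x ^ (α + β - 1) := Real.rpow_nonneg hx0.le _
      have h2nn : (0:ℝ) ≤ (2:ℝ) ^ (α + β - 1) := Real.rpow_nonneg (by norm_num) _
      have hxK0 : (0:ℝ) ≤ x - K := by linarith
      calc (α + β) * x ^ (α + β - 1) * (x - K) ≤ (α + β) * x ^ (α + β - 1) * 1 := by
            apply mul_le_mul_of_nonneg_left hxK1 (by positivity)
        _ = (α + β) * x ^ (α + β - 1) := by ring
        _ ≤ (α + β) * ((2:ℝ) ^ (α + β) * K ^ (α + β - 1)) := by
            apply mul_le_mul_of_nonneg_left _ (by linarith)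
            calc x ^ (α + β - 1) ≤ (2:ℝ) ^ (α + β - 1) * K ^ (α + β - 1) := by
                  rw [← h2K]; exact hmono
              _ ≤ (2:ℝ) ^ (α + β) * K ^ (α + β - 1) :=
                  mul_le_mul_of_nonneg_right h2exp hKnn
        _ = (α + β) * (2:ℝ) ^ (α + β) * K ^ (α + β - 1) := by ring
    linarith
  -- monotonicity facts
  have hmono_α : K ^ α ≤ x ^ α := Real.rpow_le_rpow hK0.le hxK hα0.le
  have hmono_β : K ^ β ≤ x ^ β := Real.rpow_le_rpow hK0.le hxK hβ.le
  have hmono_αβ : K ^ (α + β) ≤ x ^ (α + β) := Real.rpow_le_rpow hK0.le hxK (by linarith)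
  set X : ℂ := ((x ^ α : ℝ) : ℂ) * (z + ((x ^ β : ℝ) : ℂ)) with hXdef
  set A : ℂ := ((K ^ α : ℝ) : ℂ) * (z + ((K ^ β : ℝ) : ℂ)) with hAdef
  -- numerator identity
  have hAX : A - X = ((K ^ α - x ^ α : ℝ) : ℂ) * z + ((K ^ (α+β) - x ^ (α+β) : ℝ) : ℂ) := by
    have e1 : K ^ α * K ^ β = K ^ (α + β) := (Real.rpow_add hK0 α β).symm
    have e2 : x ^ α * x ^ β = x ^ (α + β) := (Real.rpow_add hx0 α β).symm
    rw [hAdef, hXdef, ← e1, ← e2]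
    push_cast
    ring
  -- numerator bound
  have hNum : ‖(A - X)‖ ≤ C0 * K ^ (α - 1) * (r + K ^ β) := by
    rw [hAX]
    have t1 : ‖(((K ^ α - x ^ α : ℝ) : ℂ) * z)‖ = (x ^ α - K ^ α) * r := by
      rw [norm_mul, Complex.norm_real, Real.norm_eq_abs, abs_of_nonpos (by linarith)]
      ring_nf; rw [hrdef]
    have t2 : ‖((K ^ (α+β) - x ^ (α+β) : ℝ) : ℂ)‖ = x ^ (α+β) - K ^ (α+β) := by
      rw [Complex.norm_real, Real.norm_eq_abs, abs_of_nonpos (by linarith)]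
      ring
    calc ‖(((K ^ α - x ^ α : ℝ) : ℂ) * z + ((K ^ (α+β) - x ^ (α+β) : ℝ) : ℂ))‖
        ≤ ‖(((K ^ α - x ^ α : ℝ) : ℂ) * z)‖
          + ‖((K ^ (α+β) - x ^ (α+β) : ℝ) : ℂ)‖ := norm_add_le _ _
      _ = (x ^ α - K ^ α) * r + (x ^ (α+β) - K ^ (α+β)) := by rw [t1, t2]
      _ ≤ (α * K ^ (α-1)) * r + (α + β) * (2:ℝ) ^ (α + β) * K ^ (α + β - 1) := by
          have hA : (x ^ α - K ^ α) * r ≤ α * K ^ (α-1) * r :=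
            mul_le_mul_of_nonneg_right (by linarith) (by linarith)
          linarith
      _ ≤ C0 * K ^ (α - 1) * (r + K ^ β) := by
          have eK : K ^ (α + β - 1) = K ^ (α - 1) * K ^ β := by
            rw [← Real.rpow_add hK0]; ring_nf
          rw [eK, hC0def]
          have h1 : (0:ℝ) ≤ K ^ (α - 1) := Real.rpow_nonneg hK0.le _
          have h2 : (0:ℝ) ≤ K ^ β := Real.rpow_nonneg hK0.le _
          have h3 : (0:ℝ) ≤ (2:ℝ) ^ (α + β) := Real.rpow_nonneg (by norm_num) _
          have h4 : (0:ℝ) < α + β := by linarith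
          have hr0 : (0:ℝ) ≤ r := by linarith
          have p1 : (0:ℝ) ≤ (α + β) * (2:ℝ) ^ (α + β) * K ^ (α - 1) * r :=
            mul_nonneg (mul_nonneg (mul_nonneg h4.le h3) h1) hr0
          have p2 : (0:ℝ) ≤ α * (K ^ (α - 1) * K ^ β) :=
            mul_nonneg hα0.le (mul_nonneg h1 h2)
          nlinarith [p1, p2]
  -- denominator bounds
  have hsec_x := sector_est δ hδ.le z hz0 hz (x ^ β) (Real.rpow_nonneg hx0.le β)
  have hsec_K := sector_est δ hδ.le z hz0 hz (K ^ β) (Real.rpow_nonneg hK0.le β)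
  have hsqrt0 : 0 < Real.sqrt (m / 2) := Real.sqrt_pos.mpr (by linarith)
  have hrK : (0:ℝ) < r + K ^ β := by
    have := Real.rpow_nonneg hK0.le β; linarith
  have hDx : Real.sqrt (m / 2) * (r + K ^ β) ≤ ‖(z + ((x ^ β : ℝ) : ℂ))‖ := by
    calc Real.sqrt (m / 2) * (r + K ^ β) ≤ Real.sqrt (m / 2) * (r + x ^ β) := by
          apply mul_le_mul_of_nonneg_left (by linarith) hsqrt0.le
      _ ≤ ‖(z + ((x ^ β : ℝ) : ℂ))‖ := hsec_x
  have hDK : Real.sqrt (m / 2) * (r + K ^ β) ≤ ‖(z + ((K ^ β : ℝ) : ℂ))‖ := hsec_K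
  have hXabs : K ^ α * (Real.sqrt (m / 2) * (r + K ^ β)) ≤ ‖X‖ := by
    rw [hXdef, norm_mul, Complex.norm_real, Real.norm_eq_abs, _root_.abs_of_nonneg (Real.rpow_nonneg hx0.le α)]
    apply mul_le_mul hmono_α hDx (by positivity) (Real.rpow_nonneg hx0.le α)
  have hAabs : K ^ α * (Real.sqrt (m / 2) * (r + K ^ β)) ≤ ‖A‖ := by
    rw [hAdef, norm_mul, Complex.norm_real, Real.norm_eq_abs, _root_.abs_of_nonneg (Real.rpow_nonneg hK0.le α)]
    exact mul_le_mul_of_nonneg_left hDK (Real.rpow_nonneg hK0.le α)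
  have hD0 : 0 < K ^ α * (Real.sqrt (m / 2) * (r + K ^ β)) := by positivity
  have hXpos : (0:ℝ) < ‖X‖ := lt_of_lt_of_le hD0 hXabs
  have hApos : (0:ℝ) < ‖A‖ := lt_of_lt_of_le hD0 hAabs
  have hXne : X ≠ 0 := by
    intro h; rw [h] at hXpos; simp at hXpos
  have hAne : A ≠ 0 := by
    intro h; rw [h] at hApos; simp at hApos
  have heq : 1 / X - 1 / A = (A - X) / (X * A) := by
    field_simp
  have hDen : K ^ α * K ^ α * (m / 2) * (r + K ^ β) ^ 2 ≤ ‖X‖ * ‖A‖ := by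
    have hsq : Real.sqrt (m / 2) * Real.sqrt (m / 2) = m / 2 :=
      Real.mul_self_sqrt (by linarith)
    calc K ^ α * K ^ α * (m / 2) * (r + K ^ β) ^ 2
        = (K ^ α * (Real.sqrt (m / 2) * (r + K ^ β)))
          * (K ^ α * (Real.sqrt (m / 2) * (r + K ^ β))) := by
          rw [show (K ^ α * (Real.sqrt (m / 2) * (r + K ^ β)))
              * (K ^ α * (Real.sqrt (m / 2) * (r + K ^ β)))
              = K ^ α * K ^ α * (Real.sqrt (m / 2) * Real.sqrt (m / 2)) * (r + K ^ β) ^ 2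
            from by ring, hsq]
      _ ≤ ‖X‖ * ‖A‖ :=
          mul_le_mul hXabs hAabs hD0.le hXpos.le
  have hDpos : (0:ℝ) < K ^ α * K ^ α * (m / 2) * (r + K ^ β) ^ 2 := by positivity
  have hmain : ‖(1 / X - 1 / A)‖
      ≤ (C0 * K ^ (α - 1) * (r + K ^ β)) / (K ^ α * K ^ α * (m / 2) * (r + K ^ β) ^ 2) := by
    rw [heq, norm_div, norm_mul]
    apply div_le_div₀ (by positivity) hNum hDpos hDen
  refine le_trans hmain (le_of_eq ?_)
  have hKK : K ^ α * K ^ α = K ^ (α - 1) * K ^ (α + 1) := by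
    rw [← Real.rpow_add hK0, ← Real.rpow_add hK0]; ring_nf
  rw [hKK]
  have hKa1 : K ^ (α - 1) ≠ 0 := (Real.rpow_pos_of_pos hK0 _).ne'
  have hKa2 : K ^ (α + 1) ≠ 0 := (Real.rpow_pos_of_pos hK0 _).ne'
  field_simp
end
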